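/- arXiv:math/0601429 — 3 statements merged into one kernel-verified Lean document; each statement's English description precedes it below -/
import Mathlib

section
/- Under (H1) with 0<a<1/d, the function ψ(u) = ∫_{[0,1]×ℝ^d} s^{-ad}(exp(s^{ad}·u·K(z)/(1−ad)) − 1) ds dz is well defined (the integral converges absolutely for every u∈ℝ), is strictly convex and twice continuously differentiable on ℝ, and its Fenchel–Legendre transform I(t) = sup_{u∈ℝ}{ut − ψ(u)} is a good rate function on ℝ, i.e. I takes values in [0,∞] and has compact level sets. -/
open MeasureTheory Filter Set
open scoped Topology ENNReal NNReal BigOperators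

/-- `ψ(u) = ∫_{[0,1]×ℝ^d} s^{-ad} (exp(s^{ad} u K(z)/(1-ad)) - 1) ds dz`. -/
noncomputable def psi (d : ℕ) (a : ℝ) (K : (Fin d → ℝ) → ℝ) (u : ℝ) : ℝ :=
  ∫ s in Ioc (0:ℝ) 1, ∫ z : Fin d → ℝ,
    s ^ (-(a * d)) * (Real.exp (s ^ (a * d) * u * K z / (1 - a * d)) - 1)

/-- The Fenchel–Legendre transform `I(t) = sup_u (u t - ψ(u))`, as an extended real. -/
noncomputable def Itrans (d : ℕ) (a : ℝ) (K : (Fin d → ℝ) → ℝ) (t : ℝ) : EReal :=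
  ⨆ u : ℝ, ((u * t - psi d a K u : ℝ) : EReal)

lemma abs_exp_sub_one_le' (x : ℝ) : |Real.exp x - 1| ≤ |x| * Real.exp |x| := by
  rcases le_or_gt 0 x with h | h
  · rw [abs_of_nonneg h, abs_of_nonneg (sub_nonneg.2 (Real.one_le_exp h))]
    have hx := Real.add_one_le_exp (-x)
    rw [Real.exp_neg] at hx
    have hp := Real.exp_pos x
    have key := mul_le_mul_of_nonneg_right hx hp.le
    rw [inv_mul_cancel₀ (Real.exp_ne_zero x)] at key
    nlinarith
  · rw [abs_of_neg h, abs_of_nonpos (sub_nonpos.2 (Real.exp_le_one_iff.2 h.le))]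
    have h1 := Real.add_one_le_exp x
    have h2 := Real.one_le_exp (neg_nonneg.2 h.le)
    nlinarith

/-- Proposition 1 (i): under (H1) with `0 < a < 1/d`, the integral defining `ψ` converges
absolutely for every `u`, `ψ` is strictly convex and twice continuously differentiable on `ℝ`,
and its Fenchel–Legendre transform `I` is a good rate function on `ℝ` (nonnegative, with
compact level sets). -/
theorem stmt0 (d : ℕ) (hd : 0 < d) (a : ℝ) (ha : 0 < a) (had : a < 1 / d)
    (K : (Fin d → ℝ) → ℝ)
    (hKbdd : ∃ M, ∀ z, |K z| ≤ M) (hKint : Integrable K)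
    (hKone : (∫ z, K z) = 1)
    (hKvanish : Tendsto K (cocompact (Fin d → ℝ)) (𝓝 0)) :
    (∀ u : ℝ, Integrable
        (fun p : ℝ × (Fin d → ℝ) =>
          p.1 ^ (-(a * d)) * (Real.exp (p.1 ^ (a * d) * u * K p.2 / (1 - a * d)) - 1))
        ((volume.restrict (Ioc (0:ℝ) 1)).prod volume)) ∧
    StrictConvexOn ℝ Set.univ (psi d a K) ∧
    ContDiff ℝ 2 (psi d a K) ∧
    (∀ t : ℝ, (0 : EReal) ≤ Itrans d a K t) ∧
    (∀ c : ℝ, IsCompact {t : ℝ | Itrans d a K t ≤ (c : EReal)}) := by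
  obtain ⟨M₀, hM₀⟩ := hKbdd
  set M : ℝ := max M₀ 0 with hMdef
  have hM : ∀ z, |K z| ≤ M := fun z => le_max_of_le_left (hM₀ z)
  have hM0 : (0:ℝ) ≤ M := le_max_right _ _
  have hd' : (0:ℝ) < d := by exact_mod_cast hd
  set b : ℝ := a * d with hbdef
  have hb0 : 0 < b := mul_pos ha hd'
  have hb1 : b < 1 := (lt_div_iff₀ hd').1 had
  have h1b : 0 < 1 - b := by linarith
  set μ : Measure (ℝ × (Fin d → ℝ)) := (volume.restrict (Ioc (0:ℝ) 1)).prod volume with hμdef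
  set F : ℝ → ℝ × (Fin d → ℝ) → ℝ := fun u p =>
    p.1 ^ (-b) * (Real.exp (p.1 ^ b * u * K p.2 / (1 - b)) - 1) with hFdef
  set F1 : ℝ → ℝ × (Fin d → ℝ) → ℝ := fun u p =>
    K p.2 / (1 - b) * Real.exp (p.1 ^ b * u * K p.2 / (1 - b)) with hF1def
  set F2 : ℝ → ℝ × (Fin d → ℝ) → ℝ := fun u p =>
    p.1 ^ b * (K p.2 * K p.2) / (1 - b) ^ 2 * Real.exp (p.1 ^ b * u * K p.2 / (1 - b)) with hF2def
  -- a.e. the first coordinate lies in `Ioc 0 1`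
  have haefst : ∀ᵐ p ∂μ, p.1 ∈ Ioc (0:ℝ) 1 := by
    rw [ae_iff]
    have hset : {p : ℝ × (Fin d → ℝ) | ¬ p.1 ∈ Ioc (0:ℝ) 1} = (Ioc (0:ℝ) 1)ᶜ ×ˢ univ := by
      ext p; simp
    rw [hset, hμdef, Measure.prod_prod, Measure.restrict_apply measurableSet_Ioc.compl]
    simp
  -- measurability
  have hmeasK : AEStronglyMeasurable (fun p : ℝ × (Fin d → ℝ) => K p.2) μ := hKint.1.comp_snd
  have hmeasS : ∀ c : ℝ, AEStronglyMeasurable (fun p : ℝ × (Fin d → ℝ) => p.1 ^ c) μ :=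
    fun c => (measurable_fst.pow_const c).aestronglyMeasurable
  have hmeasX : ∀ u : ℝ, AEStronglyMeasurable
      (fun p : ℝ × (Fin d → ℝ) => p.1 ^ b * u * K p.2 / (1 - b)) μ := fun u =>
    by simpa [div_eq_mul_inv] using (((hmeasS b).mul_const u).mul hmeasK).mul_const ((1-b)⁻¹)
  have hmeasE : ∀ u : ℝ, AEStronglyMeasurable
      (fun p : ℝ × (Fin d → ℝ) => Real.exp (p.1 ^ b * u * K p.2 / (1 - b))) μ :=
    fun u => Real.continuous_exp.comp_aestronglyMeasurable (hmeasX u)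
  have hmeasF : ∀ u : ℝ, AEStronglyMeasurable (F u) μ := fun u =>
    (hmeasS (-b)).mul ((hmeasE u).sub aestronglyMeasurable_const)
  have hmeasF1 : ∀ u : ℝ, AEStronglyMeasurable (F1 u) μ := fun u => by
    have : AEStronglyMeasurable (fun p : ℝ × (Fin d → ℝ) => K p.2 * (1-b)⁻¹) μ :=
      hmeasK.mul_const _
    simpa [hF1def, div_eq_mul_inv, Pi.mul_def] using this.mul (hmeasE u)
  have hmeasF2 : ∀ u : ℝ, AEStronglyMeasurable (F2 u) μ := fun u => by
    have : AEStronglyMeasurable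
        (fun p : ℝ × (Fin d → ℝ) => p.1 ^ b * (K p.2 * K p.2) * ((1-b)^2)⁻¹) μ :=
      ((hmeasS b).mul (hmeasK.mul hmeasK)).mul_const _
    simpa [hF2def, div_eq_mul_inv, Pi.mul_def] using this.mul (hmeasE u)
  -- integrable bounds
  have hboundint : ∀ C : ℝ, Integrable (fun p : ℝ × (Fin d → ℝ) => C * |K p.2|) μ := by
    intro C
    have h1 : Integrable (fun _ : ℝ => (1:ℝ)) (volume.restrict (Ioc (0:ℝ) 1)) :=
      integrable_const _
    have h2 := h1.mul_prod hKint.abs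
    simpa [one_mul] using h2.const_mul C
  -- basic estimate on the exponent
  have hXabs : ∀ u : ℝ, ∀ p : ℝ × (Fin d → ℝ), p.1 ∈ Ioc (0:ℝ) 1 →
      |p.1 ^ b * u * K p.2 / (1 - b)| ≤ |u| * M / (1 - b) := by
    intro u p hp
    have hsb : (0:ℝ) < p.1 ^ b := Real.rpow_pos_of_pos hp.1 b
    have hsble : p.1 ^ b ≤ 1 := Real.rpow_le_one hp.1.le hp.2 hb0.le
    rw [abs_div, abs_mul, abs_mul, abs_of_pos hsb, abs_of_pos h1b]
    have h3 : p.1 ^ b * |u| * |K p.2| ≤ |u| * M := by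
      have h4 : p.1 ^ b * |u| ≤ 1 * |u| := mul_le_mul hsble le_rfl (abs_nonneg u) zero_le_one
      have h5 := mul_le_mul h4 (hM p.2) (abs_nonneg _) (by positivity)
      simpa [one_mul] using h5
    exact div_le_div_of_nonneg_right h3 h1b.le
  have hEbound : ∀ u : ℝ, ∀ p : ℝ × (Fin d → ℝ), p.1 ∈ Ioc (0:ℝ) 1 →
      Real.exp (p.1 ^ b * u * K p.2 / (1 - b)) ≤ Real.exp (|u| * M / (1 - b)) := by
    intro u p hp
    exact Real.exp_le_exp.2 (le_trans (le_abs_self _) (hXabs u p hp))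
  -- the product `s^{-b} * s^b = 1`
  have hinv : ∀ s : ℝ, 0 < s → s ^ (-b) * s ^ b = 1 := by
    intro s hs
    rw [← Real.rpow_add hs]
    simp
  -- pointwise bound for F
  have hFbound : ∀ u : ℝ, ∀ p : ℝ × (Fin d → ℝ), p.1 ∈ Ioc (0:ℝ) 1 →
      |F u p| ≤ (|u| / (1 - b) * Real.exp (|u| * M / (1 - b))) * |K p.2| := by
    intro u p hp
    have hsb : (0:ℝ) < p.1 ^ b := Real.rpow_pos_of_pos hp.1 b
    have hsnb : (0:ℝ) < p.1 ^ (-b) := Real.rpow_pos_of_pos hp.1 (-b)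
    set X : ℝ := p.1 ^ b * u * K p.2 / (1 - b) with hXdef
    have h1 : |F u p| = p.1 ^ (-b) * |Real.exp X - 1| := by
      rw [hFdef]; simp only [abs_mul, abs_of_pos hsnb]; rfl
    have h2 : |F u p| ≤ p.1 ^ (-b) * (|X| * Real.exp |X|) := by
      rw [h1]
      exact mul_le_mul_of_nonneg_left (abs_exp_sub_one_le' X) hsnb.le
    have hXeq : |X| = p.1 ^ b * (|u| * |K p.2|) / (1 - b) := by
      rw [hXdef, abs_div, abs_mul, abs_mul, abs_of_pos hsb, abs_of_pos h1b]; ring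
    have h5 : p.1 ^ (-b) * |X| = |u| * |K p.2| / (1 - b) := by
      have h6 : p.1 ^ (-b) * (p.1 ^ b * (|u| * |K p.2|) / (1 - b)) =
          (p.1 ^ (-b) * p.1 ^ b) * ((|u| * |K p.2|) / (1 - b)) := by ring
      rw [hXeq, h6, hinv p.1 hp.1, one_mul]
    have h3 : p.1 ^ (-b) * (|X| * Real.exp |X|) =
        (|u| * |K p.2| / (1 - b)) * Real.exp |X| := by
      calc p.1 ^ (-b) * (|X| * Real.exp |X|)
          = (p.1 ^ (-b) * |X|) * Real.exp |X| := by ring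
        _ = (|u| * |K p.2| / (1 - b)) * Real.exp |X| := by rw [h5]
    have h4 : Real.exp |X| ≤ Real.exp (|u| * M / (1 - b)) :=
      Real.exp_le_exp.2 (hXabs u p hp)
    calc |F u p| ≤ p.1 ^ (-b) * (|X| * Real.exp |X|) := h2
      _ = (|u| * |K p.2| / (1 - b)) * Real.exp |X| := h3
      _ ≤ (|u| * |K p.2| / (1 - b)) * Real.exp (|u| * M / (1 - b)) :=
          mul_le_mul_of_nonneg_left h4 (by positivity)
      _ = (|u| / (1 - b) * Real.exp (|u| * M / (1 - b))) * |K p.2| := by ring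
  -- Part 1: integrability
  have hInt : ∀ u : ℝ, Integrable (F u) μ := by
    intro u
    refine (hboundint (|u| / (1 - b) * Real.exp (|u| * M / (1 - b)))).mono' (hmeasF u) ?_
    filter_upwards [haefst] with p hp
    rw [Real.norm_eq_abs]
    exact hFbound u p hp
  -- bounds for F1 and F2
  have hF1bound : ∀ R : ℝ, ∀ u : ℝ, |u| ≤ R → ∀ p : ℝ × (Fin d → ℝ), p.1 ∈ Ioc (0:ℝ) 1 →
      |F1 u p| ≤ (Real.exp (R * M / (1 - b)) / (1 - b)) * |K p.2| := by
    intro R u hu p hp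
    have hE : Real.exp (p.1 ^ b * u * K p.2 / (1 - b)) ≤ Real.exp (R * M / (1 - b)) := by
      refine Real.exp_le_exp.2 (le_trans (le_trans (le_abs_self _) (hXabs u p hp)) ?_)
      have : |u| * M ≤ R * M := mul_le_mul_of_nonneg_right hu hM0
      exact div_le_div_of_nonneg_right this h1b.le
    have h1 : |F1 u p| = |K p.2| / (1 - b) * Real.exp (p.1 ^ b * u * K p.2 / (1 - b)) := by
      rw [hF1def]
      simp only [abs_mul, abs_div, abs_of_pos h1b, Real.abs_exp]
    rw [h1]
    calc |K p.2| / (1 - b) * Real.exp (p.1 ^ b * u * K p.2 / (1 - b))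
        ≤ |K p.2| / (1 - b) * Real.exp (R * M / (1 - b)) :=
          mul_le_mul_of_nonneg_left hE (by positivity)
      _ = (Real.exp (R * M / (1 - b)) / (1 - b)) * |K p.2| := by ring
  have hF2bound : ∀ R : ℝ, ∀ u : ℝ, |u| ≤ R → ∀ p : ℝ × (Fin d → ℝ), p.1 ∈ Ioc (0:ℝ) 1 →
      |F2 u p| ≤ (M * Real.exp (R * M / (1 - b)) / (1 - b) ^ 2) * |K p.2| := by
    intro R u hu p hp
    have hsb : (0:ℝ) < p.1 ^ b := Real.rpow_pos_of_pos hp.1 b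
    have hsble : p.1 ^ b ≤ 1 := Real.rpow_le_one hp.1.le hp.2 hb0.le
    have hE : Real.exp (p.1 ^ b * u * K p.2 / (1 - b)) ≤ Real.exp (R * M / (1 - b)) := by
      refine Real.exp_le_exp.2 (le_trans (le_trans (le_abs_self _) (hXabs u p hp)) ?_)
      have : |u| * M ≤ R * M := mul_le_mul_of_nonneg_right hu hM0
      exact div_le_div_of_nonneg_right this h1b.le
    have h1 : |F2 u p| = p.1 ^ b * (|K p.2| * |K p.2|) / (1 - b) ^ 2 *
        Real.exp (p.1 ^ b * u * K p.2 / (1 - b)) := by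
      rw [hF2def]
      simp only [abs_mul, abs_div, abs_of_pos hsb, Real.abs_exp, abs_pow, abs_of_pos h1b]
    rw [h1]
    have h2 : p.1 ^ b * (|K p.2| * |K p.2|) ≤ M * |K p.2| := by
      have ha1 : |K p.2| * |K p.2| ≤ M * |K p.2| :=
        mul_le_mul_of_nonneg_right (hM p.2) (abs_nonneg _)
      have ha2 : p.1 ^ b * (|K p.2| * |K p.2|) ≤ 1 * (M * |K p.2|) :=
        mul_le_mul hsble ha1 (by positivity) zero_le_one
      linarith
    calc p.1 ^ b * (|K p.2| * |K p.2|) / (1 - b) ^ 2 *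
          Real.exp (p.1 ^ b * u * K p.2 / (1 - b))
        ≤ (M * |K p.2|) / (1 - b) ^ 2 * Real.exp (R * M / (1 - b)) := by
          apply mul_le_mul (div_le_div_of_nonneg_right h2 (by positivity)) hE
            (Real.exp_pos _).le (by positivity)
      _ = (M * Real.exp (R * M / (1 - b)) / (1 - b) ^ 2) * |K p.2| := by ring
  -- pointwise derivatives
  have hderF : ∀ u : ℝ, ∀ p : ℝ × (Fin d → ℝ), p.1 ∈ Ioc (0:ℝ) 1 →
      HasDerivAt (fun v => F v p) (F1 u p) u := by
    intro u p hp
    have h1 : HasDerivAt (fun v : ℝ => p.1 ^ b * v) (p.1 ^ b) u := by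
      simpa using (hasDerivAt_id u).const_mul (p.1 ^ b)
    have h2 := (h1.mul_const (K p.2)).div_const (1 - b)
    have h3 := (h2.exp.sub_const 1).const_mul (p.1 ^ (-b))
    refine h3.congr_deriv ?_
    simp only [hF1def]
    linear_combination ((K p.2 / (1 - b) *
      Real.exp (p.1 ^ b * u * K p.2 / (1 - b)))) * hinv p.1 hp.1
  have hderF1 : ∀ u : ℝ, ∀ p : ℝ × (Fin d → ℝ),
      HasDerivAt (fun v => F1 v p) (F2 u p) u := by
    intro u p
    have h1 : HasDerivAt (fun v : ℝ => p.1 ^ b * v) (p.1 ^ b) u := by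
      simpa using (hasDerivAt_id u).const_mul (p.1 ^ b)
    have h2 := (h1.mul_const (K p.2)).div_const (1 - b)
    have h3 := h2.exp.const_mul (K p.2 / (1 - b))
    refine h3.congr_deriv ?_
    simp only [hF2def, div_eq_mul_inv, sq, mul_inv]
    ring
  -- integrability of F1, F2
  have hInt1 : ∀ u : ℝ, Integrable (F1 u) μ := by
    intro u
    refine (hboundint (Real.exp (|u| * M / (1 - b)) / (1 - b))).mono' (hmeasF1 u) ?_
    filter_upwards [haefst] with p hp
    rw [Real.norm_eq_abs]
    exact hF1bound |u| u le_rfl p hp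
  have hInt2 : ∀ u : ℝ, Integrable (F2 u) μ := by
    intro u
    refine (hboundint (M * Real.exp (|u| * M / (1 - b)) / (1 - b) ^ 2)).mono' (hmeasF2 u) ?_
    filter_upwards [haefst] with p hp
    rw [Real.norm_eq_abs]
    exact hF2bound |u| u le_rfl p hp
  -- derivative of the integral
  have hderiv1 : ∀ u₀ : ℝ, HasDerivAt (fun u => ∫ p, F u p ∂μ) (∫ p, F1 u₀ p ∂μ) u₀ := by
    intro u₀
    have key := hasDerivAt_integral_of_dominated_loc_of_deriv_le (F := F) (F' := F1)
      (μ := μ) (x₀ := u₀) (s := Metric.ball u₀ 1)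
      (bound := fun p => (Real.exp ((|u₀| + 1) * M / (1 - b)) / (1 - b)) * |K p.2|)
      (Metric.ball_mem_nhds u₀ one_pos) (Eventually.of_forall hmeasF) (hInt u₀) (hmeasF1 u₀) ?_ (hboundint _) ?_
    · exact key.2
    · filter_upwards [haefst] with p hp u hu
      rw [Real.norm_eq_abs]
      refine hF1bound (|u₀| + 1) u ?_ p hp
      have := mem_ball_iff_norm.1 hu
      rw [Real.norm_eq_abs] at this
      calc |u| = |u₀ + (u - u₀)| := by ring_nf
        _ ≤ |u₀| + |u - u₀| := abs_add_le _ _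
        _ ≤ |u₀| + 1 := by linarith
    · filter_upwards [haefst] with p hp u _
      exact hderF u p hp
  have hderiv2 : ∀ u₀ : ℝ, HasDerivAt (fun u => ∫ p, F1 u p ∂μ) (∫ p, F2 u₀ p ∂μ) u₀ := by
    intro u₀
    have key := hasDerivAt_integral_of_dominated_loc_of_deriv_le (F := F1) (F' := F2)
      (μ := μ) (x₀ := u₀) (s := Metric.ball u₀ 1)
      (bound := fun p => (M * Real.exp ((|u₀| + 1) * M / (1 - b)) / (1 - b) ^ 2) * |K p.2|)
      (Metric.ball_mem_nhds u₀ one_pos) (Eventually.of_forall hmeasF1) (hInt1 u₀) (hmeasF2 u₀) ?_ (hboundint _) ?_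
    · exact key.2
    · filter_upwards [haefst] with p hp u hu
      rw [Real.norm_eq_abs]
      refine hF2bound (|u₀| + 1) u ?_ p hp
      have := mem_ball_iff_norm.1 hu
      rw [Real.norm_eq_abs] at this
      calc |u| = |u₀ + (u - u₀)| := by ring_nf
        _ ≤ |u₀| + |u - u₀| := abs_add_le _ _
        _ ≤ |u₀| + 1 := by linarith
    · filter_upwards with p u _
      exact hderF1 u p
  -- continuity of the second derivative
  have hcont2 : Continuous (fun u => ∫ p, F2 u p ∂μ) := by
    rw [continuous_iff_continuousAt]
    intro u₀
    refine continuousAt_of_dominated (Eventually.of_forall hmeasF2) ?_ (hboundint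
      (M * Real.exp ((|u₀| + 1) * M / (1 - b)) / (1 - b) ^ 2)) ?_
    · filter_upwards [eventually_abs_sub_lt u₀ one_pos] with u hu
      filter_upwards [haefst] with p hp
      rw [Real.norm_eq_abs]
      refine hF2bound (|u₀| + 1) u ?_ p hp
      calc |u| = |u₀ + (u - u₀)| := by ring_nf
        _ ≤ |u₀| + |u - u₀| := abs_add_le _ _
        _ ≤ |u₀| + 1 := by linarith [hu]
    · filter_upwards with p
      have : Continuous (fun u => F2 u p) := by
        simp only [hF2def]
        fun_prop
      exact this.continuousAt
  -- psi equals the product integral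
  have hpsi : ∀ u : ℝ, psi d a K u = ∫ p, F u p ∂μ := by
    intro u
    rw [psi, hμdef]
    exact integral_integral (hInt u)
  have hpsifun : psi d a K = fun u => ∫ p, F u p ∂μ := funext hpsi
  -- Part 3: C^2 smoothness
  have hC2 : ContDiff ℝ 2 (psi d a K) := by
    rw [hpsifun]
    have hd1 : deriv (fun u => ∫ p, F u p ∂μ) = fun u => ∫ p, F1 u p ∂μ :=
      funext fun u => (hderiv1 u).deriv
    have hd2 : deriv (fun u => ∫ p, F1 u p ∂μ) = fun u => ∫ p, F2 u p ∂μ :=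
      funext fun u => (hderiv2 u).deriv
    rw [show (2 : WithTop ℕ∞) = 1 + 1 from rfl, contDiff_succ_iff_deriv]
    refine ⟨fun u => (hderiv1 u).differentiableAt, by simp, ?_⟩
    rw [hd1, contDiff_one_iff_deriv]
    exact ⟨fun u => (hderiv2 u).differentiableAt, by rw [hd2]; exact hcont2⟩
  -- Part 2: strict convexity
  have hKpos : 0 < (volume : Measure (Fin d → ℝ)) {z | K z ≠ 0} := by
    by_contra h
    push_neg at h
    have h0 : (volume : Measure (Fin d → ℝ)) {z | K z ≠ 0} = 0 := le_antisymm h zero_le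
    have hae : K =ᵐ[volume] 0 := by
      rw [Filter.EventuallyEq, ae_iff]
      simpa using h0
    rw [integral_congr_ae hae] at hKone
    simp at hKone
  have hconv : StrictConvexOn ℝ (univ : Set ℝ) (psi d a K) := by
    rw [hpsifun]
    refine ⟨convex_univ, ?_⟩
    rintro x - y - hxy r s hr hs hrs
    simp only [smul_eq_mul]
    set w : ℝ := r * x + s * y with hwdef
    set g : ℝ × (Fin d → ℝ) → ℝ := fun p => r * F x p + s * F y p - F w p with hgdef
    have hIx := (hInt x).const_mul r
    have hIy := (hInt y).const_mul s
    have hIxy : Integrable (fun p : ℝ × (Fin d → ℝ) => r * F x p + s * F y p) μ :=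
      hIx.add hIy
    have hgint : Integrable g μ := by
      rw [hgdef]; exact hIxy.sub (hInt w)
    have hkey : ∀ p : ℝ × (Fin d → ℝ), p.1 ∈ Ioc (0:ℝ) 1 →
        Real.exp (p.1 ^ b * w * K p.2 / (1 - b)) ≤
          r * Real.exp (p.1 ^ b * x * K p.2 / (1 - b)) +
          s * Real.exp (p.1 ^ b * y * K p.2 / (1 - b)) := by
      intro p hp
      have h := convexOn_exp.2 (mem_univ (p.1 ^ b * x * K p.2 / (1 - b)))
        (mem_univ (p.1 ^ b * y * K p.2 / (1 - b))) hr.le hs.le hrs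
      simp only [smul_eq_mul] at h
      have harg : r * (p.1 ^ b * x * K p.2 / (1 - b)) +
          s * (p.1 ^ b * y * K p.2 / (1 - b)) = p.1 ^ b * w * K p.2 / (1 - b) := by
        rw [hwdef]; ring
      rwa [harg] at h
    have hgeq : ∀ p : ℝ × (Fin d → ℝ), g p = p.1 ^ (-b) *
        (r * Real.exp (p.1 ^ b * x * K p.2 / (1 - b)) +
         s * Real.exp (p.1 ^ b * y * K p.2 / (1 - b)) -
         Real.exp (p.1 ^ b * w * K p.2 / (1 - b))) := by
      intro p
      rw [hgdef, hFdef]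
      simp only
      linear_combination (-(p.1 ^ (-b) : ℝ)) * hrs
    have hg0 : 0 ≤ᵐ[μ] g := by
      filter_upwards [haefst] with p hp
      rw [Pi.zero_apply, hgeq p]
      have hsnb : (0:ℝ) < p.1 ^ (-b) := Real.rpow_pos_of_pos hp.1 (-b)
      exact mul_nonneg hsnb.le (by linarith [hkey p hp])
    have hsupp : 0 < μ (Function.support g) := by
      have hss : Ioc (0:ℝ) 1 ×ˢ {z | K z ≠ 0} ⊆ Function.support g := by
        rintro ⟨sv, z⟩ ⟨hs1, hz⟩
        have hp1 : (sv, z).1 ∈ Ioc (0:ℝ) 1 := hs1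
        have hsb : (0:ℝ) < sv ^ b := Real.rpow_pos_of_pos hs1.1 b
        have hsnb : (0:ℝ) < sv ^ (-b) := Real.rpow_pos_of_pos hs1.1 (-b)
        have hne : sv ^ b * x * K z / (1 - b) ≠ sv ^ b * y * K z / (1 - b) := by
          intro hcontra
          apply hxy
          have hc1 : sv ^ b * K z / (1 - b) ≠ 0 := div_ne_zero (mul_ne_zero hsb.ne' hz) h1b.ne'
          have hc2 : x * (sv ^ b * K z / (1 - b)) = y * (sv ^ b * K z / (1 - b)) := by
            linear_combination hcontra
          exact mul_right_cancel₀ hc1 hc2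
        have hstrict := strictConvexOn_exp.2 (mem_univ (sv ^ b * x * K z / (1 - b)))
          (mem_univ (sv ^ b * y * K z / (1 - b))) hne hr hs hrs
        simp only [smul_eq_mul] at hstrict
        have harg : r * (sv ^ b * x * K z / (1 - b)) +
            s * (sv ^ b * y * K z / (1 - b)) = sv ^ b * w * K z / (1 - b) := by
          rw [hwdef]; ring
        rw [harg] at hstrict
        have hgpos : 0 < g (sv, z) := by
          rw [hgeq (sv, z)]
          exact mul_pos hsnb (by linarith [hstrict])
        exact Function.mem_support.2 hgpos.ne'
      refine lt_of_lt_of_le ?_ (measure_mono hss)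
      rw [hμdef, Measure.prod_prod, Measure.restrict_apply measurableSet_Ioc]
      simp only [inter_self, Real.volume_Ioc]
      rw [ENNReal.mul_pos_iff]
      constructor
      · simp
      · exact hKpos
    have hintpos : 0 < ∫ p, g p ∂μ :=
      (integral_pos_iff_support_of_nonneg_ae hg0 hgint).2 hsupp
    have hsplit : ∫ p, g p ∂μ = r * ∫ p, F x p ∂μ + s * ∫ p, F y p ∂μ - ∫ p, F w p ∂μ := by
      rw [hgdef]
      rw [integral_sub hIxy (hInt w), integral_add hIx hIy,
        integral_const_mul, integral_const_mul]
    rw [hsplit] at hintpos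
    linarith
  -- Part 4: nonnegativity of Itrans
  have hpsi0 : psi d a K 0 = 0 := by
    simp [psi]
  have hnonneg : ∀ t : ℝ, (0 : EReal) ≤ Itrans d a K t := by
    intro t
    rw [Itrans]
    refine le_trans ?_ (le_iSup (fun u : ℝ => ((u * t - psi d a K u : ℝ) : EReal)) 0)
    simp [hpsi0]
  -- Part 5: compact level sets
  have hcompact : ∀ c : ℝ, IsCompact {t : ℝ | Itrans d a K t ≤ (c : EReal)} := by
    intro c
    have hclosed : IsClosed {t : ℝ | Itrans d a K t ≤ (c : EReal)} := by
      have heq : {t : ℝ | Itrans d a K t ≤ (c : EReal)} =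
          ⋂ u : ℝ, {t : ℝ | u * t - psi d a K u ≤ c} := by
        ext t
        simp only [mem_setOf_eq, mem_iInter, Itrans, iSup_le_iff, EReal.coe_le_coe_iff]
      rw [heq]
      exact isClosed_iInter fun u =>
        isClosed_le ((continuous_const.mul continuous_id).sub continuous_const) continuous_const
    have hsub : {t : ℝ | Itrans d a K t ≤ (c : EReal)} ⊆
        Icc (-(c + psi d a K (-1))) (c + psi d a K 1) := by
      intro t ht
      simp only [mem_setOf_eq, Itrans, iSup_le_iff] at ht
      have h1 := EReal.coe_le_coe_iff.1 (ht 1)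
      have h2 := EReal.coe_le_coe_iff.1 (ht (-1))
      constructor
      · linarith
      · linarith
    exact isCompact_Icc.of_isClosed_subset hclosed hsub
  refine ⟨hInt, hconv, hC2, hnonneg, hcompact⟩
end

section
/- Under (H1) with 0<a<1/d, if λ(S_−)=0 (where S_−={x∈ℝ^d : K(x)<0} and λ is Lebesgue measure), then: I(t)=+∞ for all t<0; I(0)=λ(S_+)/(1−ad) where S_+={x∈ℝ^d : K(x)>0}; I is strictly convex on (0,+∞) and continuous on (0,+∞); and for every t>0, I(t) = t·(ψ')^{-1}(t) − ψ((ψ')^{-1}(t)). -/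
open MeasureTheory Filter Set
open scoped Topology ENNReal NNReal BigOperators

namespace P1

noncomputable def muP (d : ℕ) : Measure (ℝ × (Fin d → ℝ)) :=
  (volume.restrict (Ioc (0:ℝ) 1)).prod volume

noncomputable def fF (d : ℕ) (b : ℝ) (K : (Fin d → ℝ) → ℝ) (u : ℝ)
    (p : ℝ × (Fin d → ℝ)) : ℝ :=
  p.1 ^ (-b) * (Real.exp (p.1 ^ b * u * K p.2 / (1 - b)) - 1)

noncomputable def fF' (d : ℕ) (b : ℝ) (K : (Fin d → ℝ) → ℝ) (u : ℝ)
    (p : ℝ × (Fin d → ℝ)) : ℝ :=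
  K p.2 / (1 - b) * Real.exp (p.1 ^ b * u * K p.2 / (1 - b))

noncomputable def Dpsi (d : ℕ) (b : ℝ) (K : (Fin d → ℝ) → ℝ) (u : ℝ) : ℝ :=
  ∫ p, fF' d b K u p ∂ muP d

lemma abs_exp_sub_one_le (x : ℝ) : |Real.exp x - 1| ≤ |x| * Real.exp |x| := by
  rcases le_or_gt 0 x with hx | hx
  · rw [abs_of_nonneg hx, abs_of_nonneg (by linarith [Real.one_le_exp hx] : (0:ℝ) ≤ Real.exp x - 1)]
    have h := Real.add_one_le_exp (-x)
    have hex : 0 < Real.exp x := Real.exp_pos x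
    have hmul : Real.exp (-x) * Real.exp x = 1 := by rw [← Real.exp_add]; simp
    nlinarith [mul_le_mul_of_nonneg_right h hex.le, hmul]
  · rw [abs_of_neg hx, abs_of_nonpos (by linarith [Real.exp_lt_one_iff.mpr hx] : Real.exp x - 1 ≤ 0)]
    have h := Real.add_one_le_exp x
    have : (1:ℝ) ≤ Real.exp (-x) := Real.one_le_exp (by linarith)
    nlinarith

section Core

variable {d : ℕ} {b M : ℝ} {K : (Fin d → ℝ) → ℝ}

instance : IsFiniteMeasure (volume.restrict (Ioc (0:ℝ) 1)) := by
  constructor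
  rw [Measure.restrict_apply MeasurableSet.univ, univ_inter, Real.volume_Ioc]
  simp

lemma psi_eq (a : ℝ) (hba : b = a * d) (u : ℝ)
    (hint : Integrable (fF d b K u) (muP d)) :
    psi d a K u = ∫ p, fF d b K u p ∂ muP d := by
  subst hba
  rw [muP, integral_prod _ hint]
  rfl

lemma meas_fF (hK : Measurable K) (u : ℝ) : Measurable (fF d b K u) := by
  unfold fF; fun_prop

lemma meas_fF' (hK : Measurable K) (u : ℝ) : Measurable (fF' d b K u) := by
  unfold fF'; fun_prop

lemma intKsnd (hK : Measurable K) (hKi : Integrable K) :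
    Integrable (fun p : ℝ × (Fin d → ℝ) => K p.2) (muP d) := by
  rw [muP]
  have hm : AEStronglyMeasurable (fun p : ℝ × (Fin d → ℝ) => K p.2)
      ((volume.restrict (Ioc (0:ℝ) 1)).prod volume) :=
    (hK.comp measurable_snd).aestronglyMeasurable
  refine (integrable_prod_iff hm).2 ⟨Eventually.of_forall fun s => hKi, ?_⟩
  have heq : (fun x : ℝ => ∫ y, ‖K (x, y).2‖ ∂(volume : Measure (Fin d → ℝ)))
      = fun _ => ∫ y, ‖K y‖ ∂(volume : Measure (Fin d → ℝ)) := rfl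
  rw [heq]
  exact integrable_const _

lemma ae_fst_Ioc : ∀ᵐ p ∂(muP d), p.1 ∈ Ioc (0:ℝ) 1 := by
  rw [ae_iff]
  have hsub : {p : ℝ × (Fin d → ℝ) | ¬ p.1 ∈ Ioc (0:ℝ) 1} ⊆ (Ioc (0:ℝ) 1)ᶜ ×ˢ univ := by
    intro p hp; exact ⟨hp, mem_univ _⟩
  refine measure_mono_null hsub ?_
  rw [muP, Measure.prod_prod, Measure.restrict_apply (measurableSet_Ioc.compl),
    compl_inter_self]
  simp

lemma ae_snd {p : (Fin d → ℝ) → Prop}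
    (h : ∀ᵐ z : Fin d → ℝ, p z) : ∀ᵐ q ∂(muP d), p q.2 := by
  rw [ae_iff] at h ⊢
  have hsub : {q : ℝ × (Fin d → ℝ) | ¬ p q.2} ⊆ univ ×ˢ {z | ¬ p z} := by
    intro q hq; exact ⟨mem_univ _, hq⟩
  refine measure_mono_null hsub ?_
  rw [muP, Measure.prod_prod, h, mul_zero]

lemma fF_norm_le (hb0 : 0 < b) (hb1 : b < 1) (hM : ∀ z, |K z| ≤ M) (u : ℝ)
    {p : ℝ × (Fin d → ℝ)} (hp : p.1 ∈ Ioc (0:ℝ) 1) :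
    ‖fF d b K u p‖ ≤ |u| / (1 - b) * Real.exp (|u| * M / (1 - b)) * |K p.2| := by
  obtain ⟨hs0, hs1⟩ := hp
  have hb1' : (0:ℝ) < 1 - b := by linarith
  have hsb0 : 0 < p.1 ^ b := Real.rpow_pos_of_pos hs0 b
  have hsb1 : p.1 ^ b ≤ 1 := Real.rpow_le_one hs0.le hs1 hb0.le
  have hMk : |K p.2| ≤ M := hM p.2
  set y := p.1 ^ b * u * K p.2 / (1 - b) with hy
  have h3 : |y| = p.1 ^ b * (|u| * |K p.2|) / (1 - b) := by
    rw [hy, abs_div, abs_of_pos hb1', abs_mul, abs_mul, abs_of_pos hsb0]; ring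
  have hyabs2 : |y| ≤ |u| * M / (1 - b) := by
    rw [h3]
    have hnum : p.1 ^ b * (|u| * |K p.2|) ≤ |u| * M := by
      calc p.1 ^ b * (|u| * |K p.2|) ≤ 1 * (|u| * M) :=
            mul_le_mul hsb1 (mul_le_mul_of_nonneg_left hMk (abs_nonneg u))
              (by positivity) one_pos.le
        _ = |u| * M := one_mul _
    rw [div_eq_mul_inv, div_eq_mul_inv]
    exact mul_le_mul_of_nonneg_right hnum (inv_nonneg.2 hb1'.le)
  have h4 : Real.exp |y| ≤ Real.exp (|u| * M / (1 - b)) := Real.exp_le_exp.2 hyabs2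
  have hstep : |Real.exp y - 1| ≤ |y| * Real.exp (|u| * M / (1 - b)) :=
    (abs_exp_sub_one_le y).trans (mul_le_mul_of_nonneg_left h4 (abs_nonneg y))
  have h1 : ‖fF d b K u p‖ = p.1 ^ (-b) * |Real.exp y - 1| := by
    rw [fF, Real.norm_eq_abs, abs_mul, abs_of_pos (Real.rpow_pos_of_pos hs0 (-b))]
  rw [h1]
  calc p.1 ^ (-b) * |Real.exp y - 1|
      ≤ p.1 ^ (-b) * (|y| * Real.exp (|u| * M / (1 - b))) :=
        mul_le_mul_of_nonneg_left hstep (Real.rpow_pos_of_pos hs0 (-b)).le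
    _ = (p.1 ^ (-b) * p.1 ^ b) * (|u| * |K p.2| / (1 - b) * Real.exp (|u| * M / (1 - b))) := by
        rw [h3]; ring
    _ = |u| / (1 - b) * Real.exp (|u| * M / (1 - b)) * |K p.2| := by
        rw [← Real.rpow_add hs0, neg_add_cancel, Real.rpow_zero]; ring

lemma fF'_norm_le (hb0 : 0 < b) (hb1 : b < 1) (hM : ∀ z, |K z| ≤ M) {u R : ℝ} (hu : |u| ≤ R)
    {p : ℝ × (Fin d → ℝ)} (hp : p.1 ∈ Ioc (0:ℝ) 1) :
    ‖fF' d b K u p‖ ≤ Real.exp (R * M / (1 - b)) / (1 - b) * |K p.2| := by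
  obtain ⟨hs0, hs1⟩ := hp
  have hb1' : (0:ℝ) < 1 - b := by linarith
  have hsb0 : 0 < p.1 ^ b := Real.rpow_pos_of_pos hs0 b
  have hsb1 : p.1 ^ b ≤ 1 := Real.rpow_le_one hs0.le hs1 hb0.le
  have hMk : |K p.2| ≤ M := hM p.2
  have hM0 : (0:ℝ) ≤ M := (abs_nonneg _).trans (hM p.2)
  set y := p.1 ^ b * u * K p.2 / (1 - b) with hy
  have hyle : y ≤ R * M / (1 - b) := by
    have h3 : y ≤ |y| := le_abs_self y
    have h3' : |y| = p.1 ^ b * (|u| * |K p.2|) / (1 - b) := by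
      rw [hy, abs_div, abs_of_pos hb1', abs_mul, abs_mul, abs_of_pos hsb0]; ring
    refine h3.trans ?_
    rw [h3']
    have hnum : p.1 ^ b * (|u| * |K p.2|) ≤ R * M := by
      calc p.1 ^ b * (|u| * |K p.2|) ≤ 1 * (R * M) :=
            mul_le_mul hsb1 (mul_le_mul hu hMk (abs_nonneg _) ((abs_nonneg u).trans hu))
              (by positivity) one_pos.le
        _ = R * M := one_mul _
    rw [div_eq_mul_inv, div_eq_mul_inv]
    exact mul_le_mul_of_nonneg_right hnum (inv_nonneg.2 hb1'.le)
  have h1 : ‖fF' d b K u p‖ = |K p.2| / (1 - b) * Real.exp y := by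
    rw [fF', Real.norm_eq_abs, abs_mul, abs_of_pos (Real.exp_pos y), abs_div, abs_of_pos hb1']
  rw [h1]
  calc |K p.2| / (1 - b) * Real.exp y ≤ |K p.2| / (1 - b) * Real.exp (R * M / (1 - b)) :=
        mul_le_mul_of_nonneg_left (Real.exp_le_exp.2 hyle) (by positivity)
    _ = Real.exp (R * M / (1 - b)) / (1 - b) * |K p.2| := by ring

lemma integrable_fF (hb0 : 0 < b) (hb1 : b < 1) (hK : Measurable K)
    (hM : ∀ z, |K z| ≤ M) (hKi : Integrable K) (u : ℝ) :
    Integrable (fF d b K u) (muP d) := by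
  refine Integrable.mono' (((intKsnd hK hKi).abs.const_mul
    (|u| / (1 - b) * Real.exp (|u| * M / (1 - b))))) (meas_fF hK u).aestronglyMeasurable ?_
  filter_upwards [ae_fst_Ioc] with p hp
  simpa [mul_assoc] using fF_norm_le hb0 hb1 hM u hp

lemma integrable_fF' (hb0 : 0 < b) (hb1 : b < 1) (hK : Measurable K)
    (hM : ∀ z, |K z| ≤ M) (hKi : Integrable K) (u : ℝ) :
    Integrable (fF' d b K u) (muP d) := by
  refine Integrable.mono' (((intKsnd hK hKi).abs.const_mul
    (Real.exp (|u| * M / (1 - b)) / (1 - b)))) (meas_fF' hK u).aestronglyMeasurable ?_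
  filter_upwards [ae_fst_Ioc] with p hp
  simpa [mul_assoc] using fF'_norm_le hb0 hb1 hM (le_refl |u|) hp

lemma hasDerivAt_fF (hb0 : 0 < b) {p : ℝ × (Fin d → ℝ)} (hp : p.1 ∈ Ioc (0:ℝ) 1) (x : ℝ) :
    HasDerivAt (fun u => fF d b K u p) (fF' d b K x p) x := by
  obtain ⟨hs0, _⟩ := hp
  set s := p.1
  set k := K p.2
  have h1 : HasDerivAt (fun u : ℝ => s ^ b * u * k / (1 - b)) (s ^ b * k / (1 - b)) x := by
    simpa using (((hasDerivAt_id x).const_mul (s ^ b)).mul_const k).div_const (1 - b)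
  have h2 := ((h1.exp).sub_const 1).const_mul (s ^ (-b))
  have heq : s ^ (-b) * (Real.exp (s ^ b * x * k / (1 - b)) * (s ^ b * k / (1 - b)))
      = fF' d b K x p := by
    rw [fF']
    have : s ^ (-b) * s ^ b = 1 := by
      rw [← Real.rpow_add hs0, neg_add_cancel, Real.rpow_zero]
    calc s ^ (-b) * (Real.exp (s ^ b * x * k / (1 - b)) * (s ^ b * k / (1 - b)))
        = (s ^ (-b) * s ^ b) * (Real.exp (s ^ b * x * k / (1 - b)) * (k / (1 - b))) := by ring
      _ = k / (1 - b) * Real.exp (s ^ b * x * k / (1 - b)) := by rw [this]; ring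
  rw [← heq]
  exact h2

lemma hasDerivAt_intF (hb0 : 0 < b) (hb1 : b < 1) (hK : Measurable K)
    (hM : ∀ z, |K z| ≤ M) (hKi : Integrable K) (u₀ : ℝ) :
    HasDerivAt (fun u => ∫ p, fF d b K u p ∂ muP d) (Dpsi d b K u₀) u₀ := by
  have hM0 : (0:ℝ) ≤ M := (abs_nonneg _).trans (hM (fun _ => 0))
  have := hasDerivAt_integral_of_dominated_loc_of_deriv_le (F := fun u p => fF d b K u p)
    (F' := fun u p => fF' d b K u p) (μ := muP d)
    (bound := fun p => Real.exp ((|u₀| + 1) * M / (1 - b)) / (1 - b) * |K p.2|)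
    (Metric.ball_mem_nhds u₀ one_pos)
    (Eventually.of_forall fun u => (meas_fF hK u).aestronglyMeasurable)
    (integrable_fF hb0 hb1 hK hM hKi u₀)
    ((meas_fF' hK u₀).aestronglyMeasurable)
    ?_ (((intKsnd hK hKi).abs.const_mul _)) ?_
  · exact this.2
  · filter_upwards [ae_fst_Ioc] with p hp x hx
    have hxu : |x| ≤ |u₀| + 1 := by
      have := mem_ball_iff_norm.1 hx
      have h2 := abs_sub_abs_le_abs_sub x u₀
      rw [Real.norm_eq_abs] at this
      linarith
    exact fF'_norm_le hb0 hb1 hM hxu hp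
  · filter_upwards [ae_fst_Ioc] with p hp x _
    exact hasDerivAt_fF hb0 hp x

lemma hasDerivAt_psi (a : ℝ) (hba : b = a * d) (hb0 : 0 < b) (hb1 : b < 1)
    (hK : Measurable K) (hM : ∀ z, |K z| ≤ M) (hKi : Integrable K) (u₀ : ℝ) :
    HasDerivAt (psi d a K) (Dpsi d b K u₀) u₀ := by
  have hfun : psi d a K = fun u => ∫ p, fF d b K u p ∂ muP d :=
    funext fun u => psi_eq a hba u (integrable_fF hb0 hb1 hK hM hKi u)
  rw [hfun]
  exact hasDerivAt_intF hb0 hb1 hK hM hKi u₀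

noncomputable def fF'' (d : ℕ) (b : ℝ) (K : (Fin d → ℝ) → ℝ) (u : ℝ)
    (p : ℝ × (Fin d → ℝ)) : ℝ :=
  p.1 ^ b * (K p.2 / (1 - b)) ^ 2 * Real.exp (p.1 ^ b * u * K p.2 / (1 - b))

lemma meas_fF'' (hK : Measurable K) (u : ℝ) : Measurable (fF'' d b K u) := by
  unfold fF''; fun_prop

lemma hasDerivAt_fF' (p : ℝ × (Fin d → ℝ)) (x : ℝ) :
    HasDerivAt (fun u => fF' d b K u p) (fF'' d b K x p) x := by
  set s := p.1
  set k := K p.2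
  have h1 : HasDerivAt (fun u : ℝ => s ^ b * u * k / (1 - b)) (s ^ b * k / (1 - b)) x := by
    simpa using (((hasDerivAt_id x).const_mul (s ^ b)).mul_const k).div_const (1 - b)
  have h2 := (h1.exp).const_mul (k / (1 - b))
  have heq : k / (1 - b) * (Real.exp (s ^ b * x * k / (1 - b)) * (s ^ b * k / (1 - b)))
      = fF'' d b K x p := by
    rw [fF'']; ring
  rw [← heq]
  exact h2

lemma fF''_norm_le (hb0 : 0 < b) (hb1 : b < 1) (hM : ∀ z, |K z| ≤ M) {u R : ℝ} (hu : |u| ≤ R)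
    {p : ℝ × (Fin d → ℝ)} (hp : p.1 ∈ Ioc (0:ℝ) 1) :
    ‖fF'' d b K u p‖ ≤ M / (1 - b) ^ 2 * Real.exp (R * M / (1 - b)) * |K p.2| := by
  obtain ⟨hs0, hs1⟩ := hp
  have hb1' : (0:ℝ) < 1 - b := by linarith
  have hsb0 : 0 < p.1 ^ b := Real.rpow_pos_of_pos hs0 b
  have hsb1 : p.1 ^ b ≤ 1 := Real.rpow_le_one hs0.le hs1 hb0.le
  have hMk : |K p.2| ≤ M := hM p.2
  have hM0 : (0:ℝ) ≤ M := (abs_nonneg _).trans (hM p.2)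
  set y := p.1 ^ b * u * K p.2 / (1 - b) with hy
  have hyle : y ≤ R * M / (1 - b) := by
    have h3 : y ≤ |y| := le_abs_self y
    have h3' : |y| = p.1 ^ b * (|u| * |K p.2|) / (1 - b) := by
      rw [hy, abs_div, abs_of_pos hb1', abs_mul, abs_mul, abs_of_pos hsb0]; ring
    refine h3.trans ?_
    rw [h3']
    have hnum : p.1 ^ b * (|u| * |K p.2|) ≤ R * M := by
      calc p.1 ^ b * (|u| * |K p.2|) ≤ 1 * (R * M) :=
            mul_le_mul hsb1 (mul_le_mul hu hMk (abs_nonneg _) ((abs_nonneg u).trans hu))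
              (by positivity) one_pos.le
        _ = R * M := one_mul _
    rw [div_eq_mul_inv, div_eq_mul_inv]
    exact mul_le_mul_of_nonneg_right hnum (inv_nonneg.2 hb1'.le)
  have h1 : ‖fF'' d b K u p‖ = p.1 ^ b * (K p.2 / (1 - b)) ^ 2 * Real.exp y := by
    rw [fF'', Real.norm_eq_abs, abs_mul, abs_mul, abs_of_pos hsb0, abs_of_nonneg (sq_nonneg _),
      abs_of_pos (Real.exp_pos y)]
  rw [h1]
  have h2 : K p.2 ^ 2 ≤ M * |K p.2| := by
    nlinarith [abs_nonneg (K p.2), sq_abs (K p.2), hMk]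
  have hsq : (K p.2 / (1 - b)) ^ 2 ≤ M / (1 - b) ^ 2 * |K p.2| := by
    rw [div_pow, div_eq_mul_inv, div_eq_mul_inv]
    calc K p.2 ^ 2 * ((1 - b) ^ 2)⁻¹ ≤ M * |K p.2| * ((1 - b) ^ 2)⁻¹ :=
          mul_le_mul_of_nonneg_right h2 (inv_nonneg.2 (sq_nonneg _))
      _ = M * ((1 - b) ^ 2)⁻¹ * |K p.2| := by ring
  calc p.1 ^ b * (K p.2 / (1 - b)) ^ 2 * Real.exp y
      ≤ 1 * (M / (1 - b) ^ 2 * |K p.2|) * Real.exp (R * M / (1 - b)) := by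
        apply mul_le_mul (mul_le_mul hsb1 hsq (sq_nonneg _) one_pos.le)
          (Real.exp_le_exp.2 hyle) (Real.exp_pos y).le
        exact mul_nonneg (one_pos.le) (mul_nonneg (div_nonneg hM0 (sq_nonneg _)) (abs_nonneg _))
    _ = M / (1 - b) ^ 2 * Real.exp (R * M / (1 - b)) * |K p.2| := by ring

lemma hasDerivAt_Dpsi (hb0 : 0 < b) (hb1 : b < 1) (hK : Measurable K)
    (hM : ∀ z, |K z| ≤ M) (hKi : Integrable K) (u₀ : ℝ) :
    HasDerivAt (Dpsi d b K) (∫ p, fF'' d b K u₀ p ∂ muP d) u₀ := by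
  have hM0 : (0:ℝ) ≤ M := (abs_nonneg _).trans (hM (fun _ => 0))
  have := hasDerivAt_integral_of_dominated_loc_of_deriv_le (F := fun u p => fF' d b K u p)
    (F' := fun u p => fF'' d b K u p) (μ := muP d)
    (bound := fun p => M / (1 - b) ^ 2 * Real.exp ((|u₀| + 1) * M / (1 - b)) * |K p.2|)
    (Metric.ball_mem_nhds u₀ one_pos)
    (Eventually.of_forall fun u => (meas_fF' hK u).aestronglyMeasurable)
    (integrable_fF' hb0 hb1 hK hM hKi u₀)
    ((meas_fF'' hK u₀).aestronglyMeasurable)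
    ?_ (((intKsnd hK hKi).abs.const_mul _)) ?_
  · exact this.2
  · filter_upwards [ae_fst_Ioc] with p hp x hx
    have hxu : |x| ≤ |u₀| + 1 := by
      have := mem_ball_iff_norm.1 hx
      have h2 := abs_sub_abs_le_abs_sub x u₀
      rw [Real.norm_eq_abs] at this
      linarith
    exact fF''_norm_le hb0 hb1 hM hxu hp
  · filter_upwards [] with p x _
    exact hasDerivAt_fF' p x

lemma cont_Dpsi (hb0 : 0 < b) (hb1 : b < 1) (hK : Measurable K)
    (hM : ∀ z, |K z| ≤ M) (hKi : Integrable K) : Continuous (Dpsi d b K) :=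
  continuous_iff_continuousAt.2 fun u =>
    (hasDerivAt_Dpsi hb0 hb1 hK hM hKi u).continuousAt

lemma Spos (hK0 : ∀ᵐ z : Fin d → ℝ, 0 ≤ K z) (h1 : (∫ z, K z) = 1) :
    volume {z | 0 < K z} ≠ 0 := by
  intro h
  have h2 : ∀ᵐ z : Fin d → ℝ, ¬ (0 < K z) := by rw [ae_iff]; simpa using h
  have h3 : K =ᵐ[volume] 0 := by
    filter_upwards [hK0, h2] with z hz1 hz2
    exact le_antisymm (not_lt.1 hz2) hz1
  rw [integral_congr_ae h3] at h1
  simp at h1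

lemma strictMono_Dpsi (hb0 : 0 < b) (hb1 : b < 1) (hK : Measurable K)
    (hM : ∀ z, |K z| ≤ M) (hKi : Integrable K)
    (hK0 : ∀ᵐ z : Fin d → ℝ, 0 ≤ K z) (h1 : (∫ z, K z) = 1) :
    StrictMono (Dpsi d b K) := by
  intro u v huv
  have hb1' : (0:ℝ) < 1 - b := by linarith
  set g := fun p => fF' d b K v p - fF' d b K u p with hg
  have hgi : Integrable g (muP d) :=
    (integrable_fF' hb0 hb1 hK hM hKi v).sub (integrable_fF' hb0 hb1 hK hM hKi u)
  have hgnn : 0 ≤ᵐ[muP d] g := by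
    filter_upwards [ae_fst_Ioc, ae_snd hK0] with p hp hk
    obtain ⟨hs0, _⟩ := hp
    have hsb0 : 0 < p.1 ^ b := Real.rpow_pos_of_pos hs0 b
    have : p.1 ^ b * u * K p.2 / (1 - b) ≤ p.1 ^ b * v * K p.2 / (1 - b) := by
      rw [div_eq_mul_inv, div_eq_mul_inv]
      apply mul_le_mul_of_nonneg_right ?_ (inv_nonneg.2 hb1'.le)
      calc p.1 ^ b * u * K p.2 = (p.1 ^ b * K p.2) * u := by ring
        _ ≤ (p.1 ^ b * K p.2) * v :=
          mul_le_mul_of_nonneg_left huv.le (mul_nonneg hsb0.le hk)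
        _ = p.1 ^ b * v * K p.2 := by ring
    have hexp := Real.exp_le_exp.2 this
    simp only [hg, fF', Pi.zero_apply, sub_nonneg]
    apply mul_le_mul_of_nonneg_left hexp (div_nonneg hk hb1'.le)
  have hsup : 0 < muP d (Function.support g) := by
    have hsub : (Ioc (0:ℝ) 1) ×ˢ {z | 0 < K z} ⊆ Function.support g := by
      rintro ⟨s, z⟩ ⟨hs, hz⟩
      have hs0 : (0:ℝ) < s := hs.1
      have hsb0 : 0 < s ^ b := Real.rpow_pos_of_pos hs0 b
      have hlt : s ^ b * u * K z / (1 - b) < s ^ b * v * K z / (1 - b) := by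
        rw [div_eq_mul_inv, div_eq_mul_inv]
        apply mul_lt_mul_of_pos_right ?_ (inv_pos.2 hb1')
        calc s ^ b * u * K z = (s ^ b * K z) * u := by ring
          _ < (s ^ b * K z) * v := by
            exact mul_lt_mul_of_pos_left huv (mul_pos hsb0 hz)
          _ = s ^ b * v * K z := by ring
      have : fF' d b K u (s, z) < fF' d b K v (s, z) := by
        simp only [fF']
        exact mul_lt_mul_of_pos_left (Real.exp_lt_exp.2 hlt) (div_pos hz hb1')
      simp only [Function.mem_support, hg]
      intro hc
      rw [sub_eq_zero] at hc
      exact absurd hc (ne_of_gt this)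
    refine lt_of_lt_of_le ?_ (measure_mono hsub)
    rw [muP, Measure.prod_prod, Measure.restrict_apply measurableSet_Ioc, inter_self,
      Real.volume_Ioc]
    have hN := Spos hK0 h1
    rw [pos_iff_ne_zero]
    simp only [ne_eq, mul_eq_zero, not_or]
    constructor
    · simp
    · exact hN
  have hpos : 0 < ∫ p, g p ∂ muP d :=
    (integral_pos_iff_support_of_nonneg_ae hgnn hgi).2 hsup
  have hsub : (∫ p, g p ∂ muP d) = Dpsi d b K v - Dpsi d b K u := by
    rw [hg, integral_sub (integrable_fF' hb0 hb1 hK hM hKi v)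
      (integrable_fF' hb0 hb1 hK hM hKi u)]
    rfl
  rw [hsub] at hpos
  linarith

lemma Dpsi_tendsto_atBot (hb0 : 0 < b) (hb1 : b < 1) (hK : Measurable K)
    (hM : ∀ z, |K z| ≤ M) (hKi : Integrable K)
    (hK0 : ∀ᵐ z : Fin d → ℝ, 0 ≤ K z) :
    Tendsto (Dpsi d b K) atBot (𝓝 0) := by
  have hb1' : (0:ℝ) < 1 - b := by linarith
  have h := tendsto_integral_filter_of_dominated_convergence (μ := muP d)
    (F := fun u p => fF' d b K u p) (f := fun _ => (0:ℝ))
    (bound := fun p => |K p.2| / (1 - b)) (l := atBot)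
    (Eventually.of_forall fun u => (meas_fF' hK u).aestronglyMeasurable)
    ?_ ?_ ?_
  · rw [integral_zero] at h
    exact h
  · filter_upwards [eventually_le_atBot (0:ℝ)] with u hu
    filter_upwards [ae_fst_Ioc, ae_snd hK0] with p hp hk
    obtain ⟨hs0, hs1⟩ := hp
    have hsb0 : 0 < p.1 ^ b := Real.rpow_pos_of_pos hs0 b
    have hy : p.1 ^ b * u * K p.2 / (1 - b) ≤ 0 := by
      apply div_nonpos_of_nonpos_of_nonneg ?_ hb1'.le
      calc p.1 ^ b * u * K p.2 = (p.1 ^ b * K p.2) * u := by ring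
        _ ≤ 0 := mul_nonpos_of_nonneg_of_nonpos (mul_nonneg hsb0.le hk) hu
    have hexp : Real.exp (p.1 ^ b * u * K p.2 / (1 - b)) ≤ 1 := Real.exp_le_one_iff.2 hy
    have : ‖fF' d b K u p‖ = |K p.2| / (1 - b)
        * Real.exp (p.1 ^ b * u * K p.2 / (1 - b)) := by
      rw [fF', Real.norm_eq_abs, abs_mul, abs_of_pos (Real.exp_pos _), abs_div,
        abs_of_pos hb1']
    rw [this]
    calc |K p.2| / (1 - b) * Real.exp (p.1 ^ b * u * K p.2 / (1 - b))
        ≤ |K p.2| / (1 - b) * 1 := by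
          apply mul_le_mul_of_nonneg_left hexp (by positivity)
      _ = |K p.2| / (1 - b) := mul_one _
  · exact ((intKsnd hK hKi).abs.div_const (1 - b))
  · filter_upwards [ae_fst_Ioc, ae_snd hK0] with p hp hk
    obtain ⟨hs0, _⟩ := hp
    have hsb0 : 0 < p.1 ^ b := Real.rpow_pos_of_pos hs0 b
    rcases eq_or_lt_of_le hk with hk0 | hk0
    · have : ∀ u : ℝ, fF' d b K u p = 0 := by
        intro u; rw [fF', ← hk0]; simp
      simp only [this]
      exact tendsto_const_nhds
    · have hc : 0 < p.1 ^ b * K p.2 / (1 - b) := by positivity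
      have h1 : Tendsto (fun u : ℝ => u * (p.1 ^ b * K p.2 / (1 - b))) atBot atBot :=
        tendsto_id.atBot_mul_const hc
      have h2 : Tendsto (fun u : ℝ => Real.exp (u * (p.1 ^ b * K p.2 / (1 - b)))) atBot (𝓝 0) :=
        Real.tendsto_exp_atBot.comp h1
      have h3 := h2.const_mul (K p.2 / (1 - b))
      rw [mul_zero] at h3
      apply h3.congr
      intro u
      rw [fF']
      ring_nf
  

lemma exists_level_set (hKi : Integrable K)
    (hK0 : ∀ᵐ z : Fin d → ℝ, 0 ≤ K z) (h1 : (∫ z, K z) = 1) :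
    ∃ ε : ℝ, 0 < ε ∧ 0 < volume {z | ε ≤ K z} ∧ volume {z | ε ≤ K z} < ∞ := by
  have hN := Spos hK0 h1
  by_contra hcon
  push_neg at hcon
  have hall : ∀ n : ℕ, volume {z | 1 / ((n:ℝ) + 1) ≤ K z} = 0 := by
    intro n
    have hp : (0:ℝ) < 1 / ((n:ℝ) + 1) := by positivity
    have hfin := hKi.measure_ge_lt_top hp
    by_contra hne
    exact absurd hfin (not_lt.2 (hcon _ hp (pos_iff_ne_zero.2 hne)))
  have hsub : {z | 0 < K z} ⊆ ⋃ n : ℕ, {z | 1 / ((n:ℝ) + 1) ≤ K z} := by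
    intro z hz
    obtain ⟨n, hn⟩ := exists_nat_one_div_lt (show (0:ℝ) < K z from hz)
    exact mem_iUnion.2 ⟨n, hn.le⟩
  exact hN (measure_mono_null hsub (measure_iUnion_null hall))

lemma Dpsi_large (hb0 : 0 < b) (hb1 : b < 1) (hK : Measurable K)
    (hM : ∀ z, |K z| ≤ M) (hKi : Integrable K)
    (hK0 : ∀ᵐ z : Fin d → ℝ, 0 ≤ K z) (h1 : (∫ z, K z) = 1) (t : ℝ) :
    ∃ u : ℝ, t < Dpsi d b K u := by
  have hb1' : (0:ℝ) < 1 - b := by linarith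
  obtain ⟨ε, hε, hA0, hAfin⟩ := exists_level_set hKi hK0 h1
  set A := {z | ε ≤ K z} with hA
  have hAm : MeasurableSet A := measurableSet_le measurable_const hK
  set B := (Ioc (1/2:ℝ) 1) ×ˢ A with hB
  have hBm : MeasurableSet B := (measurableSet_Ioc).prod hAm
  have hμB : muP d B = ENNReal.ofReal (1/2) * volume A := by
    rw [hB, muP, Measure.prod_prod, Measure.restrict_apply measurableSet_Ioc]
    congr 1
    have hsub : Ioc (1/2:ℝ) 1 ⊆ Ioc 0 1 := fun x hx => ⟨by linarith [hx.1], hx.2⟩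
    rw [inter_eq_self_of_subset_left hsub, Real.volume_Ioc]
    norm_num
  have hBfin : muP d B ≠ ∞ := by
    rw [hμB]
    exact ENNReal.mul_ne_top (by simp) hAfin.ne
  have hBne : muP d B ≠ 0 := by
    rw [hμB]
    exact mul_ne_zero (by simp) hA0.ne'
  have hBpos : 0 < (muP d B).toReal := ENNReal.toReal_pos hBne hBfin
  set σ := (1/2:ℝ) ^ b with hσdef
  have hσ : 0 < σ := Real.rpow_pos_of_pos one_half_pos b
  have hgrow : Tendsto (fun u : ℝ => ε / (1 - b) * Real.exp (σ * u * ε / (1 - b))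
      * (muP d B).toReal) atTop atTop := by
    apply Tendsto.atTop_mul_const hBpos
    apply Tendsto.const_mul_atTop (show (0:ℝ) < ε / (1 - b) by positivity)
    apply Real.tendsto_exp_atTop.comp
    have h2 := (tendsto_id : Tendsto (id : ℝ → ℝ) atTop atTop).atTop_mul_const
      (show (0:ℝ) < σ * ε / (1 - b) by positivity)
    exact h2.congr (fun u => by simp [id]; ring)
  obtain ⟨u, hut, hu0⟩ := ((hgrow.eventually_gt_atTop t).and (eventually_ge_atTop (0:ℝ))).exists
  refine ⟨u, hut.trans_le ?_⟩
  have hpt : ∀ p ∈ B, ε / (1 - b) * Real.exp (σ * u * ε / (1 - b)) ≤ fF' d b K u p := by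
    rintro ⟨s, z⟩ ⟨hs, hk⟩
    have hs0 : (0:ℝ) < s := lt_trans one_half_pos hs.1
    have hsb : σ ≤ s ^ b := Real.rpow_le_rpow one_half_pos.le hs.1.le hb0.le
    have hkε : ε ≤ K z := hk
    have hy : σ * u * ε / (1 - b) ≤ s ^ b * u * K z / (1 - b) := by
      rw [div_eq_mul_inv, div_eq_mul_inv]
      apply mul_le_mul_of_nonneg_right ?_ (inv_nonneg.2 hb1'.le)
      calc σ * u * ε = (σ * ε) * u := by ring
        _ ≤ (s ^ b * K z) * u := by
            apply mul_le_mul_of_nonneg_right ?_ hu0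
            exact mul_le_mul hsb hkε hε.le (Real.rpow_pos_of_pos hs0 b).le
        _ = s ^ b * u * K z := by ring
    rw [fF']
    apply mul_le_mul (by
      rw [div_eq_mul_inv, div_eq_mul_inv]
      exact mul_le_mul_of_nonneg_right hkε (inv_nonneg.2 hb1'.le))
      (Real.exp_le_exp.2 hy) (Real.exp_pos _).le (div_nonneg (hε.le.trans hkε) hb1'.le)
  have hnn : 0 ≤ᵐ[muP d] fF' d b K u := by
    filter_upwards [ae_snd hK0] with p hk
    rw [fF']
    exact mul_nonneg (div_nonneg hk hb1'.le) (Real.exp_pos _).le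
  calc ε / (1 - b) * Real.exp (σ * u * ε / (1 - b)) * (muP d B).toReal
      ≤ ∫ p in B, fF' d b K u p ∂ muP d :=
        setIntegral_ge_of_const_le_real hBm hBfin hpt
          ((integrable_fF' hb0 hb1 hK hM hKi u).integrableOn)
    _ ≤ ∫ p, fF' d b K u p ∂ muP d :=
        setIntegral_le_integral (integrable_fF' hb0 hb1 hK hM hKi u) hnn
    _ = Dpsi d b K u := rfl

lemma exists_Dpsi_eq (hb0 : 0 < b) (hb1 : b < 1) (hK : Measurable K)
    (hM : ∀ z, |K z| ≤ M) (hKi : Integrable K)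
    (hK0 : ∀ᵐ z : Fin d → ℝ, 0 ≤ K z) (h1 : (∫ z, K z) = 1) {t : ℝ} (ht : 0 < t) :
    ∃ u : ℝ, Dpsi d b K u = t := by
  have hbot := Dpsi_tendsto_atBot hb0 hb1 hK hM hKi hK0
  have h1' : ∀ᶠ u in atBot, Dpsi d b K u < t := hbot.eventually_lt_const ht
  obtain ⟨u₁, hu₁⟩ := h1'.exists
  obtain ⟨u₂, hu₂⟩ := Dpsi_large hb0 hb1 hK hM hKi hK0 h1 t
  have hle : u₁ ≤ u₂ := by
    by_contra hcon
    push_neg at hcon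
    have := strictMono_Dpsi hb0 hb1 hK hM hKi hK0 h1 hcon
    linarith
  have hivt := intermediate_value_Icc hle ((cont_Dpsi hb0 hb1 hK hM hKi).continuousOn)
  obtain ⟨u, _, hu⟩ := hivt ⟨hu₁.le, hu₂.le⟩
  exact ⟨u, hu⟩

lemma psi_sign (a : ℝ) (hba : b = a * d) (hb0 : 0 < b) (hb1 : b < 1)
    (hK0 : ∀ᵐ z : Fin d → ℝ, 0 ≤ K z) {u : ℝ} :
    (u ≤ 0 → psi d a K u ≤ 0) ∧ (0 ≤ u → 0 ≤ psi d a K u) := by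
  have hb1' : (0:ℝ) < 1 - b := by linarith
  constructor
  · intro hu
    apply integral_nonpos_of_ae
    filter_upwards [ae_restrict_mem measurableSet_Ioc] with s hs
    apply integral_nonpos_of_ae
    filter_upwards [hK0] with z hk
    rw [← hba]
    have hs0 : (0:ℝ) < s := hs.1
    have hsb0 : 0 < s ^ b := Real.rpow_pos_of_pos hs0 b
    have hy : s ^ b * u * K z / (1 - b) ≤ 0 := by
      apply div_nonpos_of_nonpos_of_nonneg ?_ hb1'.le
      calc s ^ b * u * K z = (s ^ b * K z) * u := by ring
        _ ≤ 0 := mul_nonpos_of_nonneg_of_nonpos (mul_nonneg hsb0.le hk) hu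
    have : Real.exp (s ^ b * u * K z / (1 - b)) - 1 ≤ 0 := by
      have := Real.exp_le_one_iff.2 hy
      linarith
    exact mul_nonpos_of_nonneg_of_nonpos (Real.rpow_pos_of_pos hs0 (-b)).le this
  · intro hu
    apply integral_nonneg_of_ae
    filter_upwards [ae_restrict_mem measurableSet_Ioc] with s hs
    apply integral_nonneg_of_ae
    filter_upwards [hK0] with z hk
    rw [← hba]
    have hs0 : (0:ℝ) < s := hs.1
    have hsb0 : 0 < s ^ b := Real.rpow_pos_of_pos hs0 b
    have hy : 0 ≤ s ^ b * u * K z / (1 - b) := by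
      apply div_nonneg ?_ hb1'.le
      calc (0:ℝ) ≤ (s ^ b * K z) * u := mul_nonneg (mul_nonneg hsb0.le hk) hu
        _ = s ^ b * u * K z := by ring
    have : 0 ≤ Real.exp (s ^ b * u * K z / (1 - b)) - 1 := by
      have := Real.one_le_exp hy
      linarith
    exact mul_nonneg (Real.rpow_pos_of_pos hs0 (-b)).le this

lemma max_at (a : ℝ) (hba : b = a * d) (hb0 : 0 < b) (hb1 : b < 1) (hK : Measurable K)
    (hM : ∀ z, |K z| ≤ M) (hKi : Integrable K)
    (hK0 : ∀ᵐ z : Fin d → ℝ, 0 ≤ K z) (h1 : (∫ z, K z) = 1)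
    {t u₀ : ℝ} (hD : Dpsi d b K u₀ = t) :
    ∀ u : ℝ, u ≠ u₀ → u * t - psi d a K u < u₀ * t - psi d a K u₀ := by
  have hmono := strictMono_Dpsi hb0 hb1 hK hM hKi hK0 h1
  set g := fun u => u * t - psi d a K u with hgdef
  have hg : ∀ x, HasDerivAt g (t - Dpsi d b K x) x := by
    intro x
    have h1' : HasDerivAt (fun u : ℝ => u * t) t x := by
      simpa using (hasDerivAt_id x).mul_const t
    exact h1'.sub (hasDerivAt_psi a hba hb0 hb1 hK hM hKi x)
  have hgc : Continuous g := by
    have : Differentiable ℝ g := fun x => (hg x).differentiableAt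
    exact this.continuous
  have hderiv : ∀ x, deriv g x = t - Dpsi d b K x := fun x => (hg x).deriv
  intro u hu
  rcases lt_or_gt_of_ne hu with h | h
  · have hmon : StrictMonoOn g (Icc u u₀) := by
      apply strictMonoOn_of_deriv_pos (convex_Icc u u₀) hgc.continuousOn
      intro x hx
      rw [interior_Icc] at hx
      rw [hderiv]
      have : Dpsi d b K x < Dpsi d b K u₀ := hmono hx.2
      rw [hD] at this
      linarith
    exact hmon (left_mem_Icc.2 h.le) (right_mem_Icc.2 h.le) h
  · have hmon : StrictAntiOn g (Icc u₀ u) := by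
      apply strictAntiOn_of_deriv_neg (convex_Icc u₀ u) hgc.continuousOn
      intro x hx
      rw [interior_Icc] at hx
      rw [hderiv]
      have : Dpsi d b K u₀ < Dpsi d b K x := hmono hx.1
      rw [hD] at this
      linarith
    exact hmon (left_mem_Icc.2 h.le) (right_mem_Icc.2 h.le) h

lemma Itrans_eq_at_max (a : ℝ) (hba : b = a * d) (hb0 : 0 < b) (hb1 : b < 1) (hK : Measurable K)
    (hM : ∀ z, |K z| ≤ M) (hKi : Integrable K)
    (hK0 : ∀ᵐ z : Fin d → ℝ, 0 ≤ K z) (h1 : (∫ z, K z) = 1)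
    {t u₀ : ℝ} (hD : Dpsi d b K u₀ = t) :
    Itrans d a K t = ((u₀ * t - psi d a K u₀ : ℝ) : EReal) := by
  apply le_antisymm
  · apply iSup_le
    intro u
    by_cases hu : u = u₀
    · subst hu; exact le_refl _
    · exact EReal.coe_le_coe_iff.2 (max_at a hba hb0 hb1 hK hM hKi hK0 h1 hD u hu).le
  · exact le_iSup (fun u => ((u * t - psi d a K u : ℝ) : EReal)) u₀

lemma Itrans_neg_top (a : ℝ) (hba : b = a * d) (hb0 : 0 < b) (hb1 : b < 1)
    (hK0 : ∀ᵐ z : Fin d → ℝ, 0 ≤ K z) {t : ℝ} (ht : t < 0) :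
    Itrans d a K t = ⊤ := by
  rw [EReal.eq_top_iff_forall_lt]
  intro r
  set u := min ((r + 1) / t) 0 with hudef
  have hu0 : u ≤ 0 := min_le_right _ _
  have hurt : r + 1 ≤ u * t := by
    have hle : u ≤ (r + 1) / t := min_le_left _ _
    have := mul_le_mul_of_nonpos_right hle ht.le
    calc r + 1 = ((r + 1) / t) * t := by
          rw [div_mul_eq_mul_div, mul_div_assoc, div_self ht.ne, mul_one]
      _ ≤ u * t := this
  have hps := (psi_sign a hba hb0 hb1 hK0 (u := u)).1 hu0
  have hreal : r < u * t - psi d a K u := by linarith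
  exact lt_of_lt_of_le (EReal.coe_lt_coe_iff.2 hreal)
    (le_iSup (fun u => ((u * t - psi d a K u : ℝ) : EReal)) u)

lemma rpow_integrableOn (hb1 : b < 1) :
    IntegrableOn (fun s : ℝ => s ^ (-b)) (Ioc (0:ℝ) 1) := by
  rw [← intervalIntegrable_iff_integrableOn_Ioc_of_le zero_le_one]
  exact intervalIntegral.intervalIntegrable_rpow' (by linarith)

lemma rpow_integral (hb1 : b < 1) :
    ∫ s in Ioc (0:ℝ) 1, s ^ (-b) = (1 - b)⁻¹ := by
  rw [← intervalIntegral.integral_of_le zero_le_one]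
  rw [integral_rpow (Or.inl (by linarith : (-1:ℝ) < -b))]
  rw [Real.one_rpow, Real.zero_rpow (ne_of_gt (by linarith : (0:ℝ) < -b + 1))]
  rw [sub_zero, show -b + 1 = 1 - b by ring, one_div]

lemma intG (hb1 : b < 1) (hK : Measurable K)
    (hNfin : volume {z : Fin d → ℝ | 0 < K z} ≠ ⊤) :
    Integrable (fun p : ℝ × (Fin d → ℝ) =>
      p.1 ^ (-b) * Set.indicator {z : Fin d → ℝ | 0 < K z} (fun _ => (1:ℝ)) p.2) (muP d) ∧
    (∫ p : ℝ × (Fin d → ℝ),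
      p.1 ^ (-b) * Set.indicator {z : Fin d → ℝ | 0 < K z} (fun _ => (1:ℝ)) p.2 ∂ muP d)
      = (1 - b)⁻¹ * (volume {z : Fin d → ℝ | 0 < K z}).toReal := by
  have hSm : MeasurableSet {z : Fin d → ℝ | 0 < K z} := measurableSet_lt measurable_const hK
  have hind : Integrable (Set.indicator {z : Fin d → ℝ | 0 < K z} (fun _ => (1:ℝ))) volume := by
    rw [integrable_indicator_iff hSm]
    exact integrableOn_const hNfin
  constructor
  · exact Integrable.mul_prod (rpow_integrableOn hb1) hind
  · rw [muP]
    have h := integral_prod_mul (μ := volume.restrict (Ioc (0:ℝ) 1)) (ν := volume)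
      (f := fun s : ℝ => s ^ (-b))
      (g := Set.indicator {z : Fin d → ℝ | 0 < K z} (fun _ => (1:ℝ)))
    erw [h]
    rw [rpow_integral hb1, integral_indicator_const _ hSm]
    simp [mul_comm, Measure.real]

lemma neg_fF_nonneg_ae (hb0 : 0 < b) (hb1 : b < 1)
    (hK0 : ∀ᵐ z : Fin d → ℝ, 0 ≤ K z) {u : ℝ} (hu : u ≤ 0) :
    0 ≤ᵐ[muP d] fun p => -(fF d b K u p) := by
  have hb1' : (0:ℝ) < 1 - b := by linarith
  filter_upwards [ae_fst_Ioc, ae_snd hK0] with p hp hk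
  obtain ⟨hs0, hs1⟩ := hp
  have hsb0 : 0 < p.1 ^ b := Real.rpow_pos_of_pos hs0 b
  have hy : p.1 ^ b * u * K p.2 / (1 - b) ≤ 0 := by
    apply div_nonpos_of_nonpos_of_nonneg ?_ hb1'.le
    calc p.1 ^ b * u * K p.2 = (p.1 ^ b * K p.2) * u := by ring
      _ ≤ 0 := mul_nonpos_of_nonneg_of_nonpos (mul_nonneg hsb0.le hk) hu
  have hexp : Real.exp (p.1 ^ b * u * K p.2 / (1 - b)) ≤ 1 := Real.exp_le_one_iff.2 hy
  show 0 ≤ -(fF d b K u p)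
  have hf : fF d b K u p
      = p.1 ^ (-b) * (Real.exp (p.1 ^ b * u * K p.2 / (1 - b)) - 1) := rfl
  have : 0 ≤ p.1 ^ (-b) * (1 - Real.exp (p.1 ^ b * u * K p.2 / (1 - b))) :=
    mul_nonneg (Real.rpow_pos_of_pos hs0 (-b)).le (by linarith)
  rw [hf]
  linarith [this]

lemma neg_fF_le_G (hb0 : 0 < b) (hb1 : b < 1)
    (hK0 : ∀ᵐ z : Fin d → ℝ, 0 ≤ K z) {u : ℝ} (hu : u ≤ 0) :
    ∀ᵐ p ∂(muP d), -(fF d b K u p) ≤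
      p.1 ^ (-b) * Set.indicator {z : Fin d → ℝ | 0 < K z} (fun _ => (1:ℝ)) p.2 := by
  have hb1' : (0:ℝ) < 1 - b := by linarith
  filter_upwards [ae_fst_Ioc, ae_snd hK0] with p hp hk
  obtain ⟨hs0, hs1⟩ := hp
  have hsb0 : 0 < p.1 ^ b := Real.rpow_pos_of_pos hs0 b
  have hsnb : 0 < p.1 ^ (-b) := Real.rpow_pos_of_pos hs0 (-b)
  have hf : fF d b K u p
      = p.1 ^ (-b) * (Real.exp (p.1 ^ b * u * K p.2 / (1 - b)) - 1) := rfl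
  rcases eq_or_lt_of_le hk with hk0 | hk0
  · have hz : fF d b K u p = 0 := by
      rw [hf, ← hk0]
      simp
    have hnm : p.2 ∉ {z : Fin d → ℝ | 0 < K z} := by
      intro h
      have : (0:ℝ) < K p.2 := h
      rw [← hk0] at this
      exact lt_irrefl 0 this
    rw [hz, Set.indicator_of_notMem hnm]
    simp
  · have hmem : p.2 ∈ {z : Fin d → ℝ | 0 < K z} := hk0
    rw [Set.indicator_of_mem hmem, mul_one, hf]
    have hexp : 0 < Real.exp (p.1 ^ b * u * K p.2 / (1 - b)) := Real.exp_pos _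
    calc -(p.1 ^ (-b) * (Real.exp (p.1 ^ b * u * K p.2 / (1 - b)) - 1))
        = p.1 ^ (-b) * (1 - Real.exp (p.1 ^ b * u * K p.2 / (1 - b))) := by ring
      _ ≤ p.1 ^ (-b) * 1 := mul_le_mul_of_nonneg_left (by linarith) hsnb.le
      _ = p.1 ^ (-b) := mul_one _

lemma Itrans_zero (a : ℝ) (hba : b = a * d) (hb0 : 0 < b) (hb1 : b < 1) (hK : Measurable K)
    (hM : ∀ z, |K z| ≤ M) (hKi : Integrable K)
    (hK0 : ∀ᵐ z : Fin d → ℝ, 0 ≤ K z) (h1 : (∫ z, K z) = 1) :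
    Itrans d a K 0 = (((1 - b)⁻¹ : ℝ) : EReal)
      * ((volume {z : Fin d → ℝ | 0 < K z} : ℝ≥0∞) : EReal) := by
  have hb1' : (0:ℝ) < 1 - b := by linarith
  have hSm : MeasurableSet {z : Fin d → ℝ | 0 < K z} := measurableSet_lt measurable_const hK
  rcases eq_or_ne (volume {z : Fin d → ℝ | 0 < K z}) ⊤ with hNt | hNfin
  · -- infinite case
    rw [hNt, EReal.coe_ennreal_top, EReal.coe_mul_top_of_pos (by positivity)]
    rw [EReal.eq_top_iff_forall_lt]
    intro r
    -- find a level set with large finite measure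
    set A : ℕ → Set (Fin d → ℝ) := fun n => {z | 1 / ((n:ℝ) + 1) ≤ K z} with hAdef
    have hmono : Monotone A := by
      intro m n hmn z hz
      have h2 : 1 / ((n:ℝ) + 1) ≤ 1 / ((m:ℝ) + 1) := by
        apply one_div_le_one_div_of_le (by positivity)
        exact_mod_cast Nat.add_le_add_right hmn 1
      exact le_trans h2 hz
    have hsub : {z : Fin d → ℝ | 0 < K z} ⊆ ⋃ n, A n := by
      intro z hz
      obtain ⟨n, hn⟩ := exists_nat_one_div_lt (show (0:ℝ) < K z from hz)
      exact mem_iUnion.2 ⟨n, hn.le⟩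
    have hUtop : volume (⋃ n, A n) = ⊤ :=
      top_le_iff.1 (hNt ▸ measure_mono hsub)
    have htends := tendsto_measure_iUnion_atTop (μ := volume) hmono
    rw [hUtop] at htends
    have hev : ∀ᶠ n in atTop, ENNReal.ofReal (4 * |r| + 4) < volume (A n) :=
      htends.eventually_const_lt (by simp : ENNReal.ofReal (4 * |r| + 4) < ⊤)
    obtain ⟨n, hAbig⟩ := hev.exists
    set ε : ℝ := 1 / ((n:ℝ) + 1) with hεdef
    have hε : 0 < ε := by positivity
    have hAfin : volume (A n) < ⊤ := hKi.measure_ge_lt_top hε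
    have hAm : MeasurableSet (A n) := measurableSet_le measurable_const hK
    set B := (Ioc (1/2:ℝ) 1) ×ˢ (A n) with hB
    have hBm : MeasurableSet B := measurableSet_Ioc.prod hAm
    have hμB : muP d B = ENNReal.ofReal (1/2) * volume (A n) := by
      rw [hB, muP, Measure.prod_prod, Measure.restrict_apply measurableSet_Ioc]
      congr 1
      have hsub2 : Ioc (1/2:ℝ) 1 ⊆ Ioc 0 1 := fun x hx => ⟨by linarith [hx.1], hx.2⟩
      rw [inter_eq_self_of_subset_left hsub2, Real.volume_Ioc]
      norm_num
    have hBfin : muP d B ≠ ⊤ := by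
      rw [hμB]; exact ENNReal.mul_ne_top (by simp) hAfin.ne
    set σ : ℝ := (1/2:ℝ) ^ b with hσdef
    have hσ : 0 < σ := Real.rpow_pos_of_pos one_half_pos b
    set c0 : ℝ := σ * ε / (1 - b) with hc0def
    have hc0 : 0 < c0 := by positivity
    set u : ℝ := Real.log (1/2) / c0 with hudef
    have hlog : Real.log (1/2) < 0 := Real.log_neg one_half_pos (by norm_num)
    have hu0 : u ≤ 0 := div_nonpos_of_nonpos_of_nonneg hlog.le hc0.le
    have huc0 : u * c0 = Real.log (1/2) := by
      rw [hudef, div_mul_cancel₀ _ hc0.ne']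
    -- pointwise bound on B
    have hpt : ∀ p ∈ B, (1/2 : ℝ) ≤ -(fF d b K u p) := by
      rintro ⟨s, z⟩ ⟨hs, hk⟩
      have hs0 : (0:ℝ) < s := lt_trans one_half_pos hs.1
      have hsb : σ ≤ s ^ b := Real.rpow_le_rpow one_half_pos.le hs.1.le hb0.le
      have hkε : ε ≤ K z := hk
      have hy : s ^ b * u * K z / (1 - b) ≤ Real.log (1/2) := by
        rw [← huc0, hc0def]
        calc s ^ b * u * K z / (1 - b) = ((s ^ b * K z) * u) / (1 - b) := by ring
          _ ≤ ((σ * ε) * u) / (1 - b) := by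
              rw [div_eq_mul_inv, div_eq_mul_inv]
              apply mul_le_mul_of_nonneg_right ?_ (inv_nonneg.2 hb1'.le)
              exact mul_le_mul_of_nonpos_right
                (mul_le_mul hsb hkε hε.le (Real.rpow_pos_of_pos hs0 b).le) hu0
          _ = u * (σ * ε / (1 - b)) := by ring
      have hexp : Real.exp (s ^ b * u * K z / (1 - b)) ≤ 1/2 := by
        calc Real.exp (s ^ b * u * K z / (1 - b)) ≤ Real.exp (Real.log (1/2)) :=
              Real.exp_le_exp.2 hy
          _ = 1/2 := Real.exp_log one_half_pos
      have hsnb : 1 ≤ s ^ (-b) :=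
        Real.one_le_rpow_of_pos_of_le_one_of_nonpos hs0 hs.2 (by linarith)
      calc (1/2 : ℝ) = 1 * (1/2) := (one_mul _).symm
        _ ≤ s ^ (-b) * (1 - Real.exp (s ^ b * u * K z / (1 - b))) := by
            apply mul_le_mul hsnb (by linarith) (by norm_num) (by linarith)
        _ = -(fF d b K u (s, z)) := by rw [fF]; ring
    have hint : Integrable (fun p => -(fF d b K u p)) (muP d) :=
      (integrable_fF hb0 hb1 hK hM hKi u).neg
    have h2 : (1/2 : ℝ) * (muP d B).toReal ≤ ∫ p in B, -(fF d b K u p) ∂ muP d :=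
      setIntegral_ge_of_const_le_real hBm hBfin hpt hint.integrableOn
    have h3 : (∫ p in B, -(fF d b K u p) ∂ muP d) ≤ ∫ p, -(fF d b K u p) ∂ muP d :=
      setIntegral_le_integral hint (neg_fF_nonneg_ae hb0 hb1 hK0 hu0)
    have h4 : (∫ p, -(fF d b K u p) ∂ muP d) = -(psi d a K u) := by
      rw [integral_neg, psi_eq a hba u (integrable_fF hb0 hb1 hK hM hKi u)]
    have hμBval : (muP d B).toReal = (1/2) * (volume (A n)).toReal := by
      rw [hμB, ENNReal.toReal_mul, ENNReal.toReal_ofReal (by norm_num)]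
    have hAtoReal : 4 * |r| + 4 ≤ (volume (A n)).toReal := by
      have := (ENNReal.toReal_le_toReal (by simp) hAfin.ne).2 hAbig.le
      rwa [ENNReal.toReal_ofReal (by positivity)] at this
    have hfinal : r < -(psi d a K u) := by
      have : (1/2 : ℝ) * ((1/2) * (4 * |r| + 4)) ≤ -(psi d a K u) := by
        rw [← h4]
        refine le_trans ?_ (h2.trans h3)
        rw [hμBval]
        apply mul_le_mul_of_nonneg_left ?_ (by norm_num)
        apply mul_le_mul_of_nonneg_left hAtoReal (by norm_num)
      have habs : r ≤ |r| := le_abs_self r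
      nlinarith
    have : (r : EReal) < ((u * 0 - psi d a K u : ℝ) : EReal) := by
      rw [EReal.coe_lt_coe_iff]
      simpa using hfinal
    exact lt_of_lt_of_le this (le_iSup (fun v => ((v * 0 - psi d a K v : ℝ) : EReal)) u)
  · -- finite case
    set N := volume {z : Fin d → ℝ | 0 < K z} with hN
    set G : ℝ × (Fin d → ℝ) → ℝ := fun p =>
      p.1 ^ (-b) * Set.indicator {z : Fin d → ℝ | 0 < K z} (fun _ => (1:ℝ)) p.2 with hGdef
    obtain ⟨hGint, hGval⟩ := intG hb1 hK hNfin
    have hRHS : (((1 - b)⁻¹ : ℝ) : EReal) * ((N : ℝ≥0∞) : EReal)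
        = (((1 - b)⁻¹ * N.toReal : ℝ) : EReal) := by
      rw [EReal.coe_mul]
      congr 1
      conv_lhs => rw [← ENNReal.ofReal_toReal hNfin]
      rw [EReal.coe_ennreal_ofReal, max_eq_left ENNReal.toReal_nonneg]
    rw [hRHS]
    apply le_antisymm
    · apply iSup_le
      intro v
      rw [EReal.coe_le_coe_iff]
      rcases le_total v 0 with hv | hv
      · have hpsiv : psi d a K v = ∫ p, fF d b K v p ∂ muP d :=
          psi_eq a hba v (integrable_fF hb0 hb1 hK hM hKi v)
        have hle : (∫ p, -(fF d b K v p) ∂ muP d) ≤ (1 - b)⁻¹ * N.toReal := by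
          rw [← hGval]
          exact integral_mono_ae (integrable_fF hb0 hb1 hK hM hKi v).neg hGint
            (neg_fF_le_G hb0 hb1 hK0 hv)
        rw [integral_neg] at hle
        rw [hpsiv, mul_zero, zero_sub]
        exact hle
      · have := (psi_sign a hba hb0 hb1 hK0 (u := v)).2 hv
        have hnn : 0 ≤ (1 - b)⁻¹ * N.toReal :=
          mul_nonneg (by positivity) ENNReal.toReal_nonneg
        nlinarith [this]
    · -- lower bound via dominated convergence
      set F : ℕ → ℝ × (Fin d → ℝ) → ℝ := fun n p => -(fF d b K (-(n:ℝ)) p) with hFdef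
      have hDCT : Tendsto (fun n => ∫ p, F n p ∂ muP d) atTop (𝓝 (∫ p, G p ∂ muP d)) := by
        apply tendsto_integral_of_dominated_convergence G
          (fun n => ((meas_fF hK (-(n:ℝ))).neg).aestronglyMeasurable) hGint
        · intro n
          filter_upwards [neg_fF_le_G hb0 hb1 hK0
              (show -((n:ℕ):ℝ) ≤ 0 by simp), neg_fF_nonneg_ae hb0 hb1 hK0
              (show -((n:ℕ):ℝ) ≤ 0 by simp)] with p h2 h3
          rw [Real.norm_eq_abs, Pi.neg_apply, abs_of_nonneg h3]
          exact h2
        · filter_upwards [ae_fst_Ioc, ae_snd hK0] with p hp hk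
          obtain ⟨hs0, hs1⟩ := hp
          have hsb0 : 0 < p.1 ^ b := Real.rpow_pos_of_pos hs0 b
          have hfp : ∀ n : ℕ, F n p
              = -(p.1 ^ (-b) * (Real.exp (p.1 ^ b * (-(n:ℝ)) * K p.2 / (1 - b)) - 1)) :=
            fun n => rfl
          rcases eq_or_lt_of_le hk with hk0 | hk0
          · have hzero : ∀ n : ℕ, F n p = 0 := by
              intro n
              rw [hfp n, ← hk0]
              simp
            have hnm : p.2 ∉ {z : Fin d → ℝ | 0 < K z} := by
              intro h
              have h2 : (0:ℝ) < K p.2 := h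
              rw [← hk0] at h2
              exact lt_irrefl 0 h2
            have hGzero : G p = 0 := by
              show p.1 ^ (-b)
                * Set.indicator {z : Fin d → ℝ | 0 < K z} (fun _ => (1:ℝ)) p.2 = 0
              rw [Set.indicator_of_notMem hnm, mul_zero]
            rw [hGzero]
            exact tendsto_const_nhds.congr (fun n => (hzero n).symm)
          · have hc : 0 < p.1 ^ b * K p.2 / (1 - b) := by positivity
            have h1' : Tendsto (fun n : ℕ => (n:ℝ) * (p.1 ^ b * K p.2 / (1 - b)))
                atTop atTop :=
              Tendsto.atTop_mul_const hc tendsto_natCast_atTop_atTop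
            have h2' : Tendsto (fun n : ℕ => -((n:ℝ) * (p.1 ^ b * K p.2 / (1 - b))))
                atTop atBot := tendsto_neg_atTop_atBot.comp h1'
            have h3' : Tendsto (fun n : ℕ =>
                Real.exp (-((n:ℝ) * (p.1 ^ b * K p.2 / (1 - b))))) atTop (𝓝 0) :=
              Real.tendsto_exp_atBot.comp h2'
            have h4' := (tendsto_const_nhds (x := p.1 ^ (-b)) (f := atTop)).sub
              (h3'.const_mul (p.1 ^ (-b)))
            rw [mul_zero, sub_zero] at h4'
            have hmem : p.2 ∈ {z : Fin d → ℝ | 0 < K z} := hk0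
            have hGp : G p = p.1 ^ (-b) := by
              show p.1 ^ (-b)
                * Set.indicator {z : Fin d → ℝ | 0 < K z} (fun _ => (1:ℝ)) p.2 = p.1 ^ (-b)
              rw [Set.indicator_of_mem hmem, mul_one]
            rw [hGp]
            apply h4'.congr
            intro n
            have hexp : p.1 ^ b * (-((n:ℕ):ℝ)) * K p.2 / (1 - b)
                = -((n:ℝ) * (p.1 ^ b * K p.2 / (1 - b))) := by ring
            show p.1 ^ (-b) - p.1 ^ (-b)
                * Real.exp (-((n:ℝ) * (p.1 ^ b * K p.2 / (1 - b)))) = F n p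
            rw [hfp n, hexp]
            ring
      have hterm : ∀ n : ℕ, (∫ p, F n p ∂ muP d) = -(psi d a K (-(n:ℝ))) := by
        intro n
        have : (∫ p, F n p ∂ muP d) = ∫ p, -(fF d b K (-(n:ℝ)) p) ∂ muP d := rfl
        rw [this, integral_neg, psi_eq a hba _ (integrable_fF hb0 hb1 hK hM hKi _)]
      have hcoe : Tendsto (fun n : ℕ => ((∫ p, F n p ∂ muP d : ℝ) : EReal)) atTop
          (𝓝 (((1 - b)⁻¹ * N.toReal : ℝ) : EReal)) := by
        rw [← hGval]
        exact EReal.tendsto_coe.2 hDCT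
      apply le_of_tendsto hcoe
      filter_upwards [] with n
      rw [hterm n]
      have : ((-(psi d a K (-(n:ℝ))) : ℝ) : EReal)
          = (((-(n:ℝ)) * 0 - psi d a K (-(n:ℝ)) : ℝ) : EReal) := by
        norm_num
      rw [this]
      exact le_iSup (fun v => ((v * 0 - psi d a K v : ℝ) : EReal)) (-(n:ℝ))

end Core

end P1

/-- Proposition 1 (ii): under (H1) with `0 < a < 1/d`, if `λ(S₋) = 0` where
`S₋ = {x | K x < 0}`, then `I(t) = +∞` for `t < 0`, `I(0) = λ(S₊)/(1-ad)`,
`I` is strictly convex and continuous on `(0,∞)`, and for every `t > 0` one has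
`I(t) = t (ψ')⁻¹(t) - ψ((ψ')⁻¹(t))` (i.e. there is `u` with `ψ'(u) = t` realizing this). -/
theorem stmt1 (d : ℕ) (hd : 0 < d) (a : ℝ) (ha : 0 < a) (had : a < 1 / d)
    (K : (Fin d → ℝ) → ℝ)
    (hKbdd : ∃ M, ∀ z, |K z| ≤ M) (hKint : Integrable K)
    (hKone : (∫ z, K z) = 1)
    (hKvanish : Tendsto K (cocompact (Fin d → ℝ)) (𝓝 0))
    (hSneg : volume {x : Fin d → ℝ | K x < 0} = 0) :
    (∀ t : ℝ, t < 0 → Itrans d a K t = ⊤) ∧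
    (Itrans d a K 0 = (((1 - a * d)⁻¹ : ℝ) : EReal) * ((volume {x : Fin d → ℝ | 0 < K x} : ℝ≥0∞) : EReal)) ∧
    StrictConvexOn ℝ (Ioi (0:ℝ)) (fun t => (Itrans d a K t).toReal) ∧
    ContinuousOn (fun t => (Itrans d a K t).toReal) (Ioi (0:ℝ)) ∧
    (∀ t : ℝ, 0 < t → ∃ u : ℝ, deriv (psi d a K) u = t ∧
      Itrans d a K t = ((t * u - psi d a K u : ℝ) : EReal)) := by
  classical
  obtain ⟨M, hM⟩ := hKbdd
  have hM0 : (0:ℝ) ≤ M := (abs_nonneg _).trans (hM (fun _ => 0))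
  set b : ℝ := a * d with hbdef
  have hb0 : 0 < b := mul_pos ha (by exact_mod_cast hd)
  have hb1 : b < 1 := by
    have hd' : (0:ℝ) < d := by exact_mod_cast hd
    rw [hbdef]
    exact (lt_div_iff₀ hd').1 had
  -- measurable modification of K
  set K' : (Fin d → ℝ) → ℝ := fun z => max (-M) (min M (hKint.1.mk K z)) with hK'def
  have hK'm : Measurable K' := by
    apply Measurable.max measurable_const
    exact Measurable.min measurable_const hKint.1.measurable_mk
  have heq : K =ᵐ[volume] K' := by
    filter_upwards [hKint.1.ae_eq_mk] with z hz
    rw [hK'def]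
    simp only
    rw [← hz]
    obtain ⟨h1, h2⟩ := abs_le.1 (hM z)
    rw [min_eq_right h2, max_eq_right h1]
  have hM' : ∀ z, |K' z| ≤ M := by
    intro z
    rw [abs_le]
    constructor
    · exact le_max_left _ _
    · exact max_le (by linarith) (min_le_left _ _)
  have hKi' : Integrable K' := hKint.congr heq
  have h1' : (∫ z, K' z) = 1 := by rw [← integral_congr_ae heq]; exact hKone
  have hK0 : ∀ᵐ z : Fin d → ℝ, 0 ≤ K z := by
    rw [ae_iff]
    have : {z : Fin d → ℝ | ¬ 0 ≤ K z} = {z | K z < 0} := by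
      ext z; simp [not_le]
    rw [this]
    exact hSneg
  have hK0' : ∀ᵐ z : Fin d → ℝ, 0 ≤ K' z := by
    filter_upwards [hK0, heq] with z h1 h2
    rw [← h2]; exact h1
  have hpsi_congr : psi d a K = psi d a K' := by
    funext u
    unfold psi
    refine integral_congr_ae (Eventually.of_forall fun s => ?_)
    refine integral_congr_ae (heq.mono fun z hz => ?_)
    simp only [hz]
  have hIt_congr : ∀ t, Itrans d a K t = Itrans d a K' t := by
    intro t
    unfold Itrans
    rw [hpsi_congr]
  have hvol : volume {x : Fin d → ℝ | 0 < K x} = volume {x : Fin d → ℝ | 0 < K' x} := by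
    apply measure_congr
    apply Filter.eventuallyEq_set.2
    filter_upwards [heq] with z hz
    simp only [mem_setOf_eq, hz]
  have hItval : ∀ t : ℝ, 0 < t → ∃ u : ℝ, P1.Dpsi d b K' u = t ∧
      Itrans d a K t = ((u * t - psi d a K u : ℝ) : EReal) := by
    intro t ht
    obtain ⟨u, hu⟩ := P1.exists_Dpsi_eq hb0 hb1 hK'm hM' hKi' hK0' h1' ht
    refine ⟨u, hu, ?_⟩
    rw [hIt_congr, hpsi_congr]
    exact P1.Itrans_eq_at_max a hbdef hb0 hb1 hK'm hM' hKi' hK0' h1' hu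
  have htoReal : ∀ t u : ℝ, P1.Dpsi d b K' u = t →
      (Itrans d a K t).toReal = u * t - psi d a K u := by
    intro t u hu
    rw [hIt_congr, hpsi_congr,
      P1.Itrans_eq_at_max a hbdef hb0 hb1 hK'm hM' hKi' hK0' h1' hu, EReal.toReal_coe]
  have hstrict : StrictConvexOn ℝ (Ioi (0:ℝ)) (fun t => (Itrans d a K t).toReal) := by
    constructor
    · exact convex_Ioi 0
    · intro x hx y hy hxy p q hp hq hpq
      simp only [smul_eq_mul]
      have hxpos : (0:ℝ) < x := hx
      have hypos : (0:ℝ) < y := hy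
      have htpos : 0 < p * x + q * y := by positivity
      obtain ⟨um, hm⟩ := P1.exists_Dpsi_eq hb0 hb1 hK'm hM' hKi' hK0' h1' htpos
      obtain ⟨ux, hux⟩ := P1.exists_Dpsi_eq hb0 hb1 hK'm hM' hKi' hK0' h1' hxpos
      obtain ⟨uy, huy⟩ := P1.exists_Dpsi_eq hb0 hb1 hK'm hM' hKi' hK0' h1' hypos
      have hTm := htoReal _ um hm
      have hTx := htoReal _ ux hux
      have hTy := htoReal _ uy huy
      have hmx : um ≠ ux := by
        intro h
        rw [h, hux] at hm
        have hq1 : p = 1 - q := by linarith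
        rw [hq1] at hm
        have h2 : q * y = q * x := by nlinarith [hm]
        exact hxy (mul_left_cancel₀ hq.ne' h2).symm
      have hmy : um ≠ uy := by
        intro h
        rw [h, huy] at hm
        have hq1 : q = 1 - p := by linarith
        rw [hq1] at hm
        have h2 : p * y = p * x := by nlinarith [hm]
        exact hxy (mul_left_cancel₀ hp.ne' h2).symm
      have h1 : um * x - psi d a K um < ux * x - psi d a K ux := by
        rw [hpsi_congr]
        exact P1.max_at a hbdef hb0 hb1 hK'm hM' hKi' hK0' h1' hux um hmx
      have h2 : um * y - psi d a K um < uy * y - psi d a K uy := by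
        rw [hpsi_congr]
        exact P1.max_at a hbdef hb0 hb1 hK'm hM' hKi' hK0' h1' huy um hmy
      rw [hTm, hTx, hTy]
      have H1 := mul_lt_mul_of_pos_left h1 hp
      have H2 := mul_lt_mul_of_pos_left h2 hq
      have key : p * (um * x - psi d a K um) + q * (um * y - psi d a K um)
          = um * (p * x + q * y) - (p + q) * psi d a K um := by ring
      rw [hpq, one_mul] at key
      linarith
  refine ⟨?_, ?_, hstrict, ?_, ?_⟩
  · intro t ht
    rw [hIt_congr]
    exact P1.Itrans_neg_top a hbdef hb0 hb1 hK0' ht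
  · rw [hIt_congr, hvol]
    exact P1.Itrans_zero a hbdef hb0 hb1 hK'm hM' hKi' hK0' h1'
  · exact hstrict.convexOn.continuousOn isOpen_Ioi
  · intro t ht
    obtain ⟨u, hu, hval⟩ := hItval t ht
    refine ⟨u, ?_, ?_⟩
    · rw [hpsi_congr]
      exact (P1.hasDerivAt_psi a hbdef hb0 hb1 hK'm hM' hKi' u).deriv.trans hu
    · rw [hval]
      norm_num [mul_comm]
end

section
/- Under (H1) with 0<a<1/d, the function I attains its strict global minimum at the point t = 1/(1−ad), and I(1/(1−ad)) = 0; that is, I(1/(1−ad))=0 and I(t)>0 for every t ≠ 1/(1−ad). -/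
open MeasureTheory Filter Set
open scoped Topology ENNReal NNReal BigOperators

/-- `|e^x - 1| ≤ |x| e^B` whenever `|x| ≤ B`. -/
lemma exp_sub_one_abs_le {x B : ℝ} (h : |x| ≤ B) :
    |Real.exp x - 1| ≤ |x| * Real.exp B := by
  have hB1 : (1:ℝ) ≤ Real.exp B := Real.one_le_exp ((abs_nonneg x).trans h)
  rcases le_or_gt 0 x with hx | hx
  · have h2 : (1 - x) * Real.exp x ≤ 1 := by
      have h3 : 1 - x ≤ Real.exp (-x) := by
        have := Real.add_one_le_exp (-x); linarith
      calc (1 - x) * Real.exp x ≤ Real.exp (-x) * Real.exp x :=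
            mul_le_mul_of_nonneg_right h3 (Real.exp_pos x).le
        _ = 1 := by rw [← Real.exp_add]; simp
    have h1 : Real.exp x - 1 ≤ x * Real.exp x := by nlinarith
    have h4 : Real.exp x ≤ Real.exp B := Real.exp_le_exp.mpr ((le_abs_self x).trans h)
    have h5 : 0 ≤ Real.exp x - 1 := by have := Real.one_le_exp hx; linarith
    rw [abs_of_nonneg h5, abs_of_nonneg hx]
    calc Real.exp x - 1 ≤ x * Real.exp x := h1
      _ ≤ x * Real.exp B := mul_le_mul_of_nonneg_left h4 hx
  · have hx1 : Real.exp x ≤ 1 := by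
      calc Real.exp x ≤ Real.exp 0 := Real.exp_le_exp.mpr hx.le
        _ = 1 := Real.exp_zero
    have h1 : 1 - Real.exp x ≤ -x := by
      have := Real.add_one_le_exp x; linarith
    rw [abs_of_nonpos (by linarith), abs_of_neg hx]
    calc -(Real.exp x - 1) = 1 - Real.exp x := by ring
      _ ≤ -x := h1
      _ ≤ -x * Real.exp B := le_mul_of_one_le_right (by linarith) hB1

section Helpers

variable {d : ℕ} {c : ℝ} {K : (Fin d → ℝ) → ℝ} {M : ℝ}

/-- Integrability of the inner integrand in `z`, for fixed `s ∈ (0,1]`. -/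
lemma inner_integrable (hc0 : 0 < c) (hc1 : c < 1)
    (hM : ∀ z, |K z| ≤ M) (hKint : Integrable K) (u : ℝ) {s : ℝ}
    (hs : s ∈ Ioc (0:ℝ) 1) :
    Integrable (fun z => s ^ (-c) * (Real.exp (s ^ c * u * K z / (1 - c)) - 1)) := by
  have h1c : (0:ℝ) < 1 - c := by linarith
  have hsc : (0:ℝ) < s ^ c := Real.rpow_pos_of_pos hs.1 c
  have hsc1 : s ^ c ≤ 1 := Real.rpow_le_one hs.1.le hs.2 hc0.le
  have hsneg : s ^ (-c) = (s ^ c)⁻¹ := Real.rpow_neg hs.1.le c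
  have hM0 : 0 ≤ M := (abs_nonneg _).trans (hM 0)
  set B : ℝ := |u| * M / (1 - c) with hB
  have hBnn : 0 ≤ B := by positivity
  have hxb : ∀ z, |s ^ c * u * K z / (1 - c)| ≤ B := by
    intro z
    rw [abs_div, abs_of_pos h1c, div_le_div_iff_of_pos_right h1c, abs_mul, abs_mul,
      abs_of_pos hsc]
    calc s ^ c * |u| * |K z| ≤ 1 * |u| * M := by
          apply mul_le_mul (mul_le_mul hsc1 le_rfl (abs_nonneg u) zero_le_one)
            (hM z) (abs_nonneg _) (by positivity)
      _ = |u| * M := by ring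
  apply Integrable.mono' ((hKint.abs.const_mul ((|u| / (1 - c)) * Real.exp B)))
  · apply AEMeasurable.aestronglyMeasurable
    exact aemeasurable_const.mul
      ((Real.measurable_exp.comp_aemeasurable
        ((hKint.aemeasurable.const_mul (s ^ c * u)).div_const (1 - c))).sub aemeasurable_const)
  · refine Eventually.of_forall fun z => ?_
    have h1 : |Real.exp (s ^ c * u * K z / (1 - c)) - 1|
        ≤ |s ^ c * u * K z / (1 - c)| * Real.exp B := exp_sub_one_abs_le (hxb z)
    have h2 : |s ^ c * u * K z / (1 - c)| = s ^ c * (|u| / (1 - c)) * |K z| := by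
      rw [abs_div, abs_of_pos h1c, abs_mul, abs_mul, abs_of_pos hsc]; ring
    rw [Real.norm_eq_abs, abs_mul, abs_of_pos (by rw [hsneg]; positivity : (0:ℝ) < s ^ (-c))]
    calc s ^ (-c) * |Real.exp (s ^ c * u * K z / (1 - c)) - 1|
        ≤ s ^ (-c) * (s ^ c * (|u| / (1 - c)) * |K z| * Real.exp B) := by
          apply mul_le_mul_of_nonneg_left _ (by rw [hsneg]; positivity)
          rw [← h2]; exact h1
      _ = (s ^ (-c) * s ^ c) * (|u| / (1 - c) * Real.exp B) * |K z| := by ring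
      _ = |u| / (1 - c) * Real.exp B * |K z| := by
          rw [hsneg, inv_mul_cancel₀ hsc.ne', one_mul]
  -- done

/-- Measurability and boundedness of the outer integrand, hence integrability on `(0,1]`,
together with the lower bound `u/(1-c) ≤ ψ(u)`. -/
lemma psi_bounds (hc0 : 0 < c) (hc1 : c < 1)
    (hM : ∀ z, |K z| ≤ M) (hKint : Integrable K) (hKone : (∫ z, K z) = 1) (u : ℝ) :
    IntegrableOn
      (fun s => ∫ z, s ^ (-c) * (Real.exp (s ^ c * u * K z / (1 - c)) - 1)) (Ioc (0:ℝ) 1) ∧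
    u / (1 - c) ≤
      ∫ s in Ioc (0:ℝ) 1, ∫ z, s ^ (-c) * (Real.exp (s ^ c * u * K z / (1 - c)) - 1) := by
  have h1c : (0:ℝ) < 1 - c := by linarith
  have hM0 : 0 ≤ M := (abs_nonneg _).trans (hM 0)
  set B : ℝ := |u| * M / (1 - c) with hB
  set D1 : ℝ := |u| / (1 - c) * Real.exp B with hD1
  set F : ℝ → ℝ := fun s => ∫ z, s ^ (-c) * (Real.exp (s ^ c * u * K z / (1 - c)) - 1)
    with hF
  -- a.e. strong measurability of F on (0,1]
  have hFm : AEStronglyMeasurable F (volume.restrict (Ioc (0:ℝ) 1)) := by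
    have hKm : AEMeasurable (fun p : ℝ × (Fin d → ℝ) => K p.2)
        ((volume.restrict (Ioc (0:ℝ) 1)).prod volume) :=
      hKint.aemeasurable.comp_quasiMeasurePreserving Measure.quasiMeasurePreserving_snd
    have hφ : AEStronglyMeasurable
        (fun p : ℝ × (Fin d → ℝ) =>
          p.1 ^ (-c) * (Real.exp (p.1 ^ c * u * K p.2 / (1 - c)) - 1))
        ((volume.restrict (Ioc (0:ℝ) 1)).prod volume) := by
      apply AEMeasurable.aestronglyMeasurable
      have hm1 : Measurable fun p : ℝ × (Fin d → ℝ) => p.1 ^ (-c) := by measurability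
      have hm2 : Measurable fun p : ℝ × (Fin d → ℝ) => p.1 ^ c := by measurability
      exact hm1.aemeasurable.mul
        ((Real.measurable_exp.comp_aemeasurable
          (((hm2.aemeasurable.mul_const u).mul hKm).div_const (1 - c))).sub
          aemeasurable_const)
    exact hφ.integral_prod_right'
  -- bound ‖F s‖ ≤ D1 * ∫|K| on (0,1]
  have hFbdd : ∀ s ∈ Ioc (0:ℝ) 1, ‖F s‖ ≤ D1 * ∫ z, |K z| := by
    intro s hs
    have hsc : (0:ℝ) < s ^ c := Real.rpow_pos_of_pos hs.1 c
    have hsc1 : s ^ c ≤ 1 := Real.rpow_le_one hs.1.le hs.2 hc0.le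
    have hsneg : s ^ (-c) = (s ^ c)⁻¹ := Real.rpow_neg hs.1.le c
    have hint := inner_integrable hc0 hc1 hM hKint u hs
    have h1 : ‖F s‖ ≤ ∫ z, ‖s ^ (-c) * (Real.exp (s ^ c * u * K z / (1 - c)) - 1)‖ :=
      norm_integral_le_integral_norm _
    have h2 : (∫ z, ‖s ^ (-c) * (Real.exp (s ^ c * u * K z / (1 - c)) - 1)‖)
        ≤ ∫ z, D1 * |K z| := by
      apply integral_mono hint.norm (hKint.abs.const_mul D1)
      intro z
      dsimp only
      have hxb : |s ^ c * u * K z / (1 - c)| ≤ B := by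
        rw [abs_div, abs_of_pos h1c, div_le_div_iff_of_pos_right h1c, abs_mul, abs_mul,
          abs_of_pos hsc]
        calc s ^ c * |u| * |K z| ≤ 1 * |u| * M := by
              apply mul_le_mul (mul_le_mul hsc1 le_rfl (abs_nonneg u) zero_le_one)
                (hM z) (abs_nonneg _) (by positivity)
          _ = |u| * M := by ring
      have h3 : |Real.exp (s ^ c * u * K z / (1 - c)) - 1|
          ≤ |s ^ c * u * K z / (1 - c)| * Real.exp B := exp_sub_one_abs_le hxb
      have h4 : |s ^ c * u * K z / (1 - c)| = s ^ c * (|u| / (1 - c)) * |K z| := by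
        rw [abs_div, abs_of_pos h1c, abs_mul, abs_mul, abs_of_pos hsc]; ring
      simp only [Real.norm_eq_abs]
      rw [abs_mul, abs_of_pos (by rw [hsneg]; positivity : (0:ℝ) < s ^ (-c))]
      calc s ^ (-c) * |Real.exp (s ^ c * u * K z / (1 - c)) - 1|
          ≤ s ^ (-c) * (s ^ c * (|u| / (1 - c)) * |K z| * Real.exp B) := by
            apply mul_le_mul_of_nonneg_left _ (by rw [hsneg]; positivity)
            rw [← h4]; exact h3
        _ = (s ^ (-c) * s ^ c) * (|u| / (1 - c) * Real.exp B * |K z|) := by ring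
        _ = D1 * |K z| := by rw [hsneg, inv_mul_cancel₀ hsc.ne', one_mul, hD1]
    have h5 : (∫ z, D1 * |K z|) = D1 * ∫ z, |K z| := integral_const_mul _ _
    linarith [h1.trans (h2.trans_eq h5)]
  have hFint : IntegrableOn F (Ioc (0:ℝ) 1) := by
    apply Integrable.mono' (integrable_const (D1 * ∫ z, |K z|)) hFm
    rw [ae_restrict_iff' measurableSet_Ioc]
    exact Eventually.of_forall hFbdd
  refine ⟨hFint, ?_⟩
  -- lower bound
  have hlow : ∀ s ∈ Ioc (0:ℝ) 1, u / (1 - c) ≤ F s := by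
    intro s hs
    have hsc : (0:ℝ) < s ^ c := Real.rpow_pos_of_pos hs.1 c
    have hsneg : s ^ (-c) = (s ^ c)⁻¹ := Real.rpow_neg hs.1.le c
    have hint := inner_integrable hc0 hc1 hM hKint u hs
    have h1 : (∫ z, (u / (1 - c)) * K z) ≤ F s := by
      apply integral_mono (hKint.const_mul _) hint
      intro z
      dsimp only
      have hx := Real.add_one_le_exp (s ^ c * u * K z / (1 - c))
      have h2 : s ^ c * u * K z / (1 - c) ≤ Real.exp (s ^ c * u * K z / (1 - c)) - 1 := by
        linarith
      have h3 : (u / (1 - c)) * K z = s ^ (-c) * (s ^ c * u * K z / (1 - c)) := by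
        rw [hsneg]
        field_simp
      rw [h3]
      exact mul_le_mul_of_nonneg_left h2 (by rw [hsneg]; positivity)
    rw [integral_const_mul, hKone, mul_one] at h1
    exact h1
  calc u / (1 - c) = ∫ _ in Ioc (0:ℝ) 1, u / (1 - c) := by
        simp [Real.volume_Ioc]
    _ ≤ ∫ s in Ioc (0:ℝ) 1, F s :=
        setIntegral_mono_on (integrableOn_const (by simp [Real.volume_Ioc]))
          hFint measurableSet_Ioc hlow

/-- Quadratic upper bound for small `u`. -/
lemma psi_quadratic (hc0 : 0 < c) (hc1 : c < 1)
    (hM : ∀ z, |K z| ≤ M) (hKint : Integrable K) (hKone : (∫ z, K z) = 1)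
    {u : ℝ} (hu : |u| * (M + 1) / (1 - c) ≤ 1) :
    (∫ s in Ioc (0:ℝ) 1, ∫ z, s ^ (-c) * (Real.exp (s ^ c * u * K z / (1 - c)) - 1))
      ≤ u / (1 - c) + u ^ 2 * ((M + 1) ^ 2 * (∫ z, |K z|) / (1 - c) ^ 2) := by
  have h1c : (0:ℝ) < 1 - c := by linarith
  have hM0 : 0 ≤ M := (abs_nonneg _).trans (hM 0)
  obtain ⟨hFint, -⟩ := psi_bounds hc0 hc1 hM hKint hKone u
  set F : ℝ → ℝ := fun s => ∫ z, s ^ (-c) * (Real.exp (s ^ c * u * K z / (1 - c)) - 1)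
  have hup : ∀ s ∈ Ioc (0:ℝ) 1,
      F s ≤ u / (1 - c) + u ^ 2 * ((M + 1) ^ 2 * (∫ z, |K z|) / (1 - c) ^ 2) := by
    intro s hs
    have hsc : (0:ℝ) < s ^ c := Real.rpow_pos_of_pos hs.1 c
    have hsc1 : s ^ c ≤ 1 := Real.rpow_le_one hs.1.le hs.2 hc0.le
    have hsneg : s ^ (-c) = (s ^ c)⁻¹ := Real.rpow_neg hs.1.le c
    have hint := inner_integrable hc0 hc1 hM hKint u hs
    set G : (Fin d → ℝ) → ℝ :=
      fun z => (u / (1 - c)) * K z + (u ^ 2 * (M + 1) ^ 2 / (1 - c) ^ 2) * |K z|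
      with hG
    have hGint : Integrable G := (hKint.const_mul _).add (hKint.abs.const_mul _)
    have h1 : F s ≤ ∫ z, G z := by
      apply integral_mono hint hGint
      intro z
      dsimp only [G]
      set x : ℝ := s ^ c * u * K z / (1 - c) with hx
      have hxb : |x| ≤ 1 := by
        have : |x| ≤ |u| * (M + 1) / (1 - c) := by
          rw [hx, abs_div, abs_of_pos h1c, div_le_div_iff_of_pos_right h1c, abs_mul, abs_mul,
            abs_of_pos hsc]
          calc s ^ c * |u| * |K z| ≤ 1 * |u| * (M + 1) := by
                apply mul_le_mul (mul_le_mul hsc1 le_rfl (abs_nonneg u) zero_le_one)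
                  ((hM z).trans (by linarith)) (abs_nonneg _) (by positivity)
            _ = |u| * (M + 1) := by ring
        exact this.trans hu
      have hexp : Real.exp x - 1 ≤ x + x ^ 2 := by
        have := Real.abs_exp_sub_one_sub_id_le hxb
        have h2 := (abs_le.mp this).2
        linarith
      have h3 : s ^ (-c) * (Real.exp x - 1) ≤ s ^ (-c) * (x + x ^ 2) :=
        mul_le_mul_of_nonneg_left hexp (by rw [hsneg]; positivity)
      have h4 : s ^ (-c) * (x + x ^ 2)
          ≤ u / (1 - c) * K z + u ^ 2 * (M + 1) ^ 2 / (1 - c) ^ 2 * |K z| := by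
        have hxid : s ^ (-c) * x = (u / (1 - c)) * K z := by
          rw [hx, hsneg]; field_simp
        have hx2 : s ^ (-c) * x ^ 2 = s ^ c * (u ^ 2 * (K z) ^ 2 / (1 - c) ^ 2) := by
          rw [hx, hsneg]
          field_simp
        have h5 : s ^ c * (u ^ 2 * (K z) ^ 2 / (1 - c) ^ 2)
            ≤ (u ^ 2 * (M + 1) ^ 2 / (1 - c) ^ 2) * |K z| := by
          have hKz : |K z| ≤ M + 1 := (hM z).trans (by linarith)
          have hK2 : (K z) ^ 2 ≤ (M + 1) * |K z| := by
            have h9 : (K z) ^ 2 = |K z| * |K z| := by rw [← sq_abs, sq]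
            rw [h9]
            exact mul_le_mul_of_nonneg_right hKz (abs_nonneg _)
          have h6 : s ^ c * (u ^ 2 * (K z) ^ 2 / (1 - c) ^ 2)
              ≤ 1 * (u ^ 2 * ((M + 1) * |K z|) / (1 - c) ^ 2) := by
            apply mul_le_mul hsc1 _ (by positivity) zero_le_one
            apply div_le_div_of_nonneg_right _ (by positivity)
            exact mul_le_mul_of_nonneg_left hK2 (sq_nonneg u)
          calc s ^ c * (u ^ 2 * (K z) ^ 2 / (1 - c) ^ 2)
              ≤ 1 * (u ^ 2 * ((M + 1) * |K z|) / (1 - c) ^ 2) := h6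
            _ ≤ (u ^ 2 * (M + 1) ^ 2 / (1 - c) ^ 2) * |K z| := by
                rw [one_mul]
                have h7 : u ^ 2 * ((M + 1) * |K z|) / (1 - c) ^ 2
                    = (u ^ 2 * (M + 1) / (1 - c) ^ 2) * |K z| := by ring
                rw [h7]
                apply mul_le_mul_of_nonneg_right _ (abs_nonneg _)
                apply div_le_div_of_nonneg_right _ (by positivity)
                nlinarith [mul_nonneg (sq_nonneg u)
                  (mul_nonneg (by linarith : (0:ℝ) ≤ M + 1) hM0)]
        rw [mul_add, hxid, hx2]
        linarith
      linarith
    have h8 : (∫ z, G z)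
        = u / (1 - c) + (u ^ 2 * (M + 1) ^ 2 / (1 - c) ^ 2) * ∫ z, |K z| := by
      rw [hG, integral_add (hKint.const_mul _) (hKint.abs.const_mul _),
        integral_const_mul, integral_const_mul, hKone, mul_one]
    rw [h8] at h1
    calc F s ≤ u / (1 - c) + (u ^ 2 * (M + 1) ^ 2 / (1 - c) ^ 2) * ∫ z, |K z| := h1
      _ = u / (1 - c) + u ^ 2 * ((M + 1) ^ 2 * (∫ z, |K z|) / (1 - c) ^ 2) := by ring
  calc (∫ s in Ioc (0:ℝ) 1, F s)
      ≤ ∫ _ in Ioc (0:ℝ) 1,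
          (u / (1 - c) + u ^ 2 * ((M + 1) ^ 2 * (∫ z, |K z|) / (1 - c) ^ 2)) :=
        setIntegral_mono_on hFint (integrableOn_const (by simp [Real.volume_Ioc]))
          measurableSet_Ioc hup
    _ = u / (1 - c) + u ^ 2 * ((M + 1) ^ 2 * (∫ z, |K z|) / (1 - c) ^ 2) := by
        simp [Real.volume_Ioc]

end Helpers

lemma psi_zero (d : ℕ) (a : ℝ) (K : (Fin d → ℝ) → ℝ) : psi d a K 0 = 0 := by
  simp [psi]

set_option maxHeartbeats 1000000 in
/-- Proposition 1 (iv): under (H1) with `0 < a < 1/d`, the rate function `I` attains its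
strict global minimum at `t = 1/(1-ad)`, with `I(1/(1-ad)) = 0` and `I(t) > 0` for every
`t ≠ 1/(1-ad)`. -/
theorem stmt3 (d : ℕ) (hd : 0 < d) (a : ℝ) (ha : 0 < a) (had : a < 1 / d)
    (K : (Fin d → ℝ) → ℝ)
    (hKbdd : ∃ M, ∀ z, |K z| ≤ M) (hKint : Integrable K)
    (hKone : (∫ z, K z) = 1)
    (hKvanish : Tendsto K (cocompact (Fin d → ℝ)) (𝓝 0)) :
    Itrans d a K (1 / (1 - a * d)) = 0 ∧
    ∀ t : ℝ, t ≠ 1 / (1 - a * d) → 0 < Itrans d a K t := by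
  obtain ⟨M, hM⟩ := hKbdd
  have hdR : (0:ℝ) < d := by exact_mod_cast hd
  have hc0 : 0 < a * d := mul_pos ha hdR
  have hc1 : a * d < 1 := by
    rw [lt_div_iff₀ hdR] at had
    linarith
  have h1c : (0:ℝ) < 1 - a * d := by linarith
  have hM0 : 0 ≤ M := (abs_nonneg _).trans (hM 0)
  have hpsi_eq : ∀ u : ℝ, psi d a K u =
      ∫ s in Ioc (0:ℝ) 1, ∫ z,
        s ^ (-(a * d)) * (Real.exp (s ^ (a * d) * u * K z / (1 - a * d)) - 1) := fun u => rfl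
  -- lower bound on psi
  have hlow : ∀ u : ℝ, u / (1 - a * d) ≤ psi d a K u := by
    intro u
    rw [hpsi_eq u]
    exact (psi_bounds hc0 hc1 hM hKint hKone u).2
  constructor
  · apply le_antisymm
    · apply iSup_le
      intro u
      apply EReal.coe_nonpos.mpr
      have := hlow u
      rw [mul_one_div]
      linarith
    · have h0 : ((0:ℝ) : EReal) ≤ ⨆ u : ℝ, ((u * (1 / (1 - a * d)) - psi d a K u : ℝ) : EReal) := by
        apply le_iSup_of_le 0
        apply EReal.coe_le_coe_iff.mpr
        rw [psi_zero]
        simp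
      simpa [Itrans] using h0
  · intro t ht
    set tstar : ℝ := 1 / (1 - a * d) with htstar
    set ε : ℝ := t - tstar with hε
    have hεne : ε ≠ 0 := sub_ne_zero.mpr ht
    have hεpos : 0 < |ε| := abs_pos.mpr hεne
    set L : ℝ := ∫ z, |K z| with hL
    have hLnn : 0 ≤ L := integral_nonneg fun z => abs_nonneg _
    set C : ℝ := (M + 1) ^ 2 * L / (1 - a * d) ^ 2 with hC
    have hCnn : 0 ≤ C := by positivity
    set δ : ℝ := (1 - a * d) / (M + 1) with hδ
    have hδpos : 0 < δ := by positivity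
    set η : ℝ := min δ (|ε| / (2 * (C + 1))) with hη
    have hηpos : 0 < η := lt_min hδpos (by positivity)
    set u : ℝ := if 0 < ε then η else -η with hu
    have huabs : |u| = η := by
      rw [hu]
      split_ifs
      · exact abs_of_pos hηpos
      · rw [abs_neg]; exact abs_of_pos hηpos
    have huε : u * ε = η * |ε| := by
      rw [hu]
      split_ifs with h
      · rw [abs_of_pos h]
      · rw [abs_of_neg (lt_of_le_of_ne (not_lt.mp h) hεne)]; ring
    have hu2 : u ^ 2 = η ^ 2 := by
      rw [← sq_abs, huabs]
    -- quadratic bound applies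
    have hucond : |u| * (M + 1) / (1 - a * d) ≤ 1 := by
      rw [huabs, div_le_one h1c]
      calc η * (M + 1) ≤ δ * (M + 1) :=
            mul_le_mul_of_nonneg_right (min_le_left _ _) (by positivity)
        _ = 1 - a * d := by rw [hδ]; field_simp
    have hquad : psi d a K u ≤ u / (1 - a * d) + u ^ 2 * C := by
      rw [hpsi_eq u, hC]
      exact psi_quadratic hc0 hc1 hM hKint hKone hucond
    have hval : 0 < u * t - psi d a K u := by
      have h1 : u * t - psi d a K u ≥ u * t - (u / (1 - a * d) + u ^ 2 * C) := by linarith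
      have h2 : u * t - (u / (1 - a * d) + u ^ 2 * C) = u * ε - u ^ 2 * C := by
        rw [hε, htstar]; field_simp; ring
      rw [h2] at h1
      rw [huε, hu2] at h1
      have hηle : η ≤ |ε| / (2 * (C + 1)) := min_le_right _ _
      have h3 : 0 < η * |ε| - η ^ 2 * C := by
        have h4 : η * C ≤ |ε| / (2 * (C + 1)) * C :=
          mul_le_mul_of_nonneg_right hηle hCnn
        have h5 : |ε| / (2 * (C + 1)) * C < |ε| := by
          rw [div_mul_eq_mul_div, div_lt_iff₀ (by positivity)]
          nlinarith
        nlinarith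
      linarith
    have hle : ((u * t - psi d a K u : ℝ) : EReal) ≤ Itrans d a K t := by
      rw [Itrans]
      exact le_iSup (fun v : ℝ => ((v * t - psi d a K v : ℝ) : EReal)) u
    calc (0 : EReal) < ((u * t - psi d a K u : ℝ) : EReal) := EReal.coe_pos.mpr hval
      _ ≤ Itrans d a K t := hle
end
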